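/- arXiv:1112.3758 — 7 statements merged into one kernel-verified Lean document; each statement's English description precedes it below -/
import Mathlib

section
/- For every regular language L over a finite alphabet Σ and every arithmetic progression s(i) = ai + b with a ≥ 1, the filtered language L_{a,b} = { w_{a,b} : w ∈ L } is regular. -/
/-- `filt a b w` is the word formed by the letters of `w` at positions
`b, a+b, 2a+b, …` that are less than `|w|`. -/
def filt {α : Type*} (a b : ℕ) (w : List α) : List α :=
  (List.range w.length).filterMap (fun i => w[a * i + b]?)

/-- `filtL a b L = { w_{a,b} : w ∈ L }`. -/
def filtL {α : Type*} (a b : ℕ) (L : Language α) : Language α :=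
  (filt a b) '' L

section lemmas
variable {α : Type*} {a b : ℕ}

theorem filt_norm (ha : 1 ≤ a) (w : List α) {n : ℕ} (hn : w.length ≤ n) :
    (List.range n).filterMap (fun i => w[a * i + b]?) = filt a b w := by
  induction n, hn using Nat.le_induction with
  | base => rfl
  | succ n hn ih =>
      rw [List.range_succ, List.filterMap_append, ih]
      have : a * n + b ≥ w.length := le_trans (le_trans hn (Nat.le_mul_of_pos_left n ha))
        (Nat.le_add_right _ _)
      simp [List.getElem?_eq_none this]

theorem filt_eq_nil (ha : 1 ≤ a) (w : List α) : filt a b w = [] ↔ w.length ≤ b := by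
  constructor
  · intro h
    by_contra hb
    push_neg at hb
    rw [filt, List.filterMap_eq_nil_iff] at h
    have h0 : (0 : ℕ) ∈ List.range w.length := by
      simp; omega
    have := h 0 h0
    simp only [Nat.mul_zero, Nat.zero_add] at this
    rw [List.getElem?_eq_none_iff] at this
    omega
  · intro h
    rw [filt, List.filterMap_eq_nil_iff]
    intro i _
    rw [List.getElem?_eq_none_iff]
    omega

theorem filt_decomp (ha : 1 ≤ a) (x : List α) (c : α) (t : List α) (hx : x.length = b) :
    filt a b (x ++ c :: t) = c :: filt a (a - 1) t := by
  have hlen : (x ++ c :: t).length = (b + t.length) + 1 := by simp [hx]; omega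
  have key : ∀ j : ℕ, (x ++ c :: t)[a * (j + 1) + b]? = t[a * j + (a - 1)]? := by
    intro j
    have h1 : a * (j + 1) + b = (x.length + 1) + (a * j + (a - 1)) := by
      rw [hx, Nat.mul_add, Nat.mul_one]; omega
    rw [h1]
    rw [show x ++ c :: t = (x ++ [c]) ++ t by simp]
    rw [List.getElem?_append_right (by simp [hx])]
    congr 1
    simp [hx]
  rw [filt, hlen, List.range_succ_eq_map, List.filterMap_cons, List.filterMap_map]
  have h0 : (x ++ c :: t)[a * 0 + b]? = some c := by
    rw [Nat.mul_zero, Nat.zero_add, ← hx, List.getElem?_append_right le_rfl]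
    simp
  rw [h0]
  congr 1
  have : (fun i => (x ++ c :: t)[a * i + b]?) ∘ Nat.succ = fun j => t[a * j + (a - 1)]? := by
    funext j
    exact key j
  rw [this, filt_norm ha t (by omega)]

theorem filt_eq_cons (ha : 1 ≤ a) (w : List α) (c : α) (v : List α) :
    filt a b w = c :: v ↔
      ∃ x t, x.length = b ∧ w = x ++ c :: t ∧ filt a (a - 1) t = v := by
  constructor
  · intro h
    have hb : b < w.length := by
      by_contra hb
      push_neg at hb
      have h2 := (filt_eq_nil (b := b) ha w).2 hb
      rw [h] at h2; simp at h2
    refine ⟨w.take b, w.drop (b + 1), by simp [Nat.min_eq_left hb.le], ?_, ?_⟩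
    · conv_lhs => rw [← List.take_append_drop b w, List.drop_eq_getElem_cons hb]
      congr 2
      have := filt_decomp (b := b) ha (w.take b) w[b] (w.drop (b + 1))
        (by simp [Nat.min_eq_left hb.le])
      rw [← List.take_append_drop b w, List.drop_eq_getElem_cons hb] at h
      rw [this] at h
      exact (List.cons.injEq _ _ _ _ ▸ h).1
    · have hw : w = w.take b ++ w[b] :: w.drop (b + 1) := by
        conv_lhs => rw [← List.take_append_drop b w, List.drop_eq_getElem_cons hb]
      rw [hw, filt_decomp ha _ _ _ (by simp [Nat.min_eq_left hb.le])] at h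
      exact (List.cons.injEq _ _ _ _ ▸ h).2
  · rintro ⟨x, t, hx, rfl, rfl⟩
    exact filt_decomp ha x c t hx

end lemmas

section il
variable {α : Type*}

/-- Interleavings: `Il a g v u` means `u = x₀ c₀ x₁ c₁ … x_{k-1} c_{k-1}` where
`v = c₀…c_{k-1}`, `|x₀| = g`, and `|xᵢ| = a-1` for `i ≥ 1`. -/
def Il (a : ℕ) : ℕ → List α → List α → Prop
  | _, [], u => u = []
  | g, c :: v, u => ∃ x t, x.length = g ∧ Il a (a - 1) v t ∧ u = x ++ c :: t

theorem filt_char {a : ℕ} (ha : 1 ≤ a) :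
    ∀ (v : List α) (g : ℕ) (w : List α),
      filt a g w = v ↔
        ∃ u z, Il a g v u ∧
          z.length ≤ (match v with | [] => g | _ :: _ => a - 1) ∧ w = u ++ z := by
  intro v
  induction v with
  | nil =>
      intro g w
      rw [filt_eq_nil ha]
      simp only [Il]
      constructor
      · intro h; exact ⟨[], w, rfl, h, by simp⟩
      · rintro ⟨u, z, rfl, hz, rfl⟩; simpa using hz
  | cons c v ih =>
      intro g w
      rw [filt_eq_cons ha]
      simp only [Il]
      constructor
      · rintro ⟨x, t, hx, rfl, hfilt⟩
        rw [ih] at hfilt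
        obtain ⟨u, z, hu, hz, rfl⟩ := hfilt
        refine ⟨x ++ c :: u, z, ⟨x, u, hx, hu, rfl⟩, ?_, by simp⟩
        cases v <;> exact hz
      · rintro ⟨u, z, ⟨x, t, hx, hil, rfl⟩, hz, rfl⟩
        refine ⟨x, t ++ z, hx, by simp, ?_⟩
        rw [ih]
        exact ⟨t, z, hil, by cases v <;> exact hz, rfl⟩

end il

section dfa
variable {α : Type*} {σ : Type} (M : DFA α σ) (a b : ℕ)

/-- The DFA accepting `filtL a b M.accepts`. -/
def filtDFA : DFA α (Set σ × Bool) where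
  step := fun p c =>
    ({q' | ∃ q ∈ p.1, ∃ y : List α, y.length = (if p.2 then a - 1 else b) ∧
        q' = M.step (M.evalFrom q y) c}, true)
  start := ({M.start}, false)
  accept := {p | ∃ q ∈ p.1, ∃ z : List α,
      z.length ≤ (if p.2 then a - 1 else b) ∧ M.evalFrom q z ∈ M.accept}

theorem filtDFA_evalFrom (v : List α) :
    ∀ S : Set σ, (filtDFA M a b).evalFrom (S, true) v =
      ({q' | ∃ q ∈ S, ∃ u, Il a (a - 1) v u ∧ q' = M.evalFrom q u}, true) := by
  induction v with
  | nil =>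
      intro S
      simp only [DFA.evalFrom_nil, Il]
      congr 1
      ext q'
      simp only [Set.mem_setOf_eq]
      constructor
      · intro h; exact ⟨q', h, [], rfl, rfl⟩
      · rintro ⟨q, hq, u, rfl, rfl⟩; exact hq
  | cons c v ih =>
      intro S
      have hstep : (filtDFA M a b).evalFrom (S, true) (c :: v) =
          (filtDFA M a b).evalFrom ((filtDFA M a b).step (S, true) c) v := rfl
      rw [hstep]
      show (filtDFA M a b).evalFrom
        ({q' | ∃ q ∈ S, ∃ y : List α, y.length = a - 1 ∧
          q' = M.step (M.evalFrom q y) c}, true) v = _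
      rw [ih]
      congr 1
      ext q''
      simp only [Set.mem_setOf_eq, Il]
      constructor
      · rintro ⟨q', ⟨q, hq, y, hy, rfl⟩, u, hu, rfl⟩
        refine ⟨q, hq, y ++ c :: u, ⟨y, u, hy, hu, rfl⟩, ?_⟩
        rw [DFA.evalFrom_of_append]
        rfl
      · rintro ⟨q, hq, _, ⟨y, u, hy, hu, rfl⟩, rfl⟩
        refine ⟨M.step (M.evalFrom q y) c, ⟨q, hq, y, hy, rfl⟩, u, hu, ?_⟩
        rw [DFA.evalFrom_of_append]
        rfl

theorem filtDFA_correct (ha : 1 ≤ a) :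
    (filtDFA M a b).accepts = filtL a b M.accepts := by
  ext v
  rw [DFA.mem_accepts]
  show (filtDFA M a b).evalFrom ({M.start}, false) v ∈ _ ↔ _
  constructor
  · intro h
    cases v with
    | nil =>
        rw [DFA.evalFrom_nil] at h
        obtain ⟨q, hq, z, hz, hacc⟩ := h
        rw [Set.mem_singleton_iff] at hq
        subst hq
        simp only [Bool.false_eq_true, if_false] at hz
        refine ⟨z, hacc, ?_⟩
        rw [filt_eq_nil ha]; exact hz
    | cons c v =>
        have hstep : (filtDFA M a b).evalFrom ({M.start}, false) (c :: v) =
            (filtDFA M a b).evalFrom (({q' | ∃ q ∈ ({M.start} : Set σ), ∃ y : List α,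
              y.length = b ∧ q' = M.step (M.evalFrom q y) c} : Set σ), true) v := rfl
        rw [hstep, filtDFA_evalFrom] at h
        obtain ⟨q'', ⟨q', ⟨q, hq, x, hx, rfl⟩, u, hu, rfl⟩, z, hz, hacc⟩ := h
        rw [Set.mem_singleton_iff] at hq
        subst hq
        rw [if_pos rfl] at hz
        refine ⟨x ++ c :: (u ++ z), ?_, ?_⟩ <;> skip
        · show M.evalFrom M.start _ ∈ M.accept
          rw [show x ++ c :: (u ++ z) = (x ++ c :: u) ++ z by simp,
            DFA.evalFrom_of_append, DFA.evalFrom_of_append]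
          exact hacc
        · rw [filt_char ha]
          exact ⟨x ++ c :: u, z, ⟨x, u, hx, hu, rfl⟩, hz, by simp⟩
  · rintro ⟨w, hw, hfilt⟩
    rw [filt_char ha] at hfilt
    obtain ⟨u, z, hu, hz, rfl⟩ := hfilt
    cases v with
    | nil =>
        simp only [Il] at hu
        subst hu
        refine ⟨M.start, rfl, z, ?_, ?_⟩
        · exact hz
        · exact (hw : M.evalFrom M.start ([] ++ z) ∈ M.accept)
    | cons c v =>
        obtain ⟨x, t, hx, hil, rfl⟩ := hu
        have hstep : (filtDFA M a b).evalFrom ({M.start}, false) (c :: v) =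
            (filtDFA M a b).evalFrom (({q' | ∃ q ∈ ({M.start} : Set σ), ∃ y : List α,
              y.length = b ∧ q' = M.step (M.evalFrom q y) c} : Set σ), true) v := rfl
        rw [hstep, filtDFA_evalFrom]
        refine ⟨M.evalFrom (M.step (M.evalFrom M.start x) c) t,
          ⟨M.step (M.evalFrom M.start x) c, ⟨M.start, rfl, x, hx, rfl⟩, t, hil, rfl⟩,
          z, by rw [if_pos rfl]; exact hz, ?_⟩
        have : M.evalFrom M.start ((x ++ c :: t) ++ z) ∈ M.accept := hw
        rw [DFA.evalFrom_of_append, DFA.evalFrom_of_append] at this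
        exact this

end dfa

theorem filtL_regular {α : Type*} [Fintype α] (L : Language α) (hL : L.IsRegular)
    (a b : ℕ) (ha : 1 ≤ a) : (filtL a b L).IsRegular := by
  obtain ⟨σ, _, M, rfl⟩ := hL
  have : Finite (Set σ × Bool) := by infer_instance
  exact ⟨Set σ × Bool, Fintype.ofFinite _, filtDFA M a b, filtDFA_correct M a b ha⟩
end

section
/- For every regular language L, the set of languages { L_{a,b} : a ≥ 1, b ≥ 0 } obtained by filtering L by all strong arithmetic progressions is finite. -/
section Aux

variable {α : Type*}

lemma filterMap_range_eq_of_none {β : Type*} (f : ℕ → Option β) {m n : ℕ} (h : m ≤ n)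
    (h2 : ∀ i, m ≤ i → f i = none) :
    (List.range n).filterMap f = (List.range m).filterMap f := by
  obtain ⟨k, rfl⟩ := Nat.exists_eq_add_of_le h
  rw [List.range_add, List.filterMap_append, List.filterMap_map]
  have hnil : List.filterMap (f ∘ fun x => m + x) (List.range k) = [] :=
    List.filterMap_eq_nil_iff.2 (fun i _ => h2 _ (Nat.le_add_right m i))
  rw [hnil, List.append_nil]

lemma filt_nil (a b : ℕ) : filt a b ([] : List α) = [] := rfl

lemma filt_drop (a b : ℕ) (ha : 1 ≤ a) (w : List α) :
    filt a b w = filt a 0 (w.drop b) := by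
  unfold filt
  rw [List.length_drop]
  have h1 : (List.range w.length).filterMap (fun i => w[a * i + b]?) =
      (List.range (w.length - b)).filterMap (fun i => w[a * i + b]?) := by
    apply filterMap_range_eq_of_none _ (Nat.sub_le _ _)
    intro i hi
    apply List.getElem?_eq_none
    have : i ≤ a * i := Nat.le_mul_of_pos_left i ha
    omega
  rw [h1]
  congr 1
  funext i
  rw [List.getElem?_drop]
  congr 1
  omega

lemma filt_cons (a : ℕ) (ha : 1 ≤ a) (c : α) (w : List α) :
    filt a 0 (c :: w) = c :: filt a 0 (w.drop (a - 1)) := by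
  unfold filt
  rw [List.length_cons, List.range_succ_eq_map, List.length_drop]
  have h0 : (c :: w)[a * 0 + 0]? = some c := by simp
  simp only [List.filterMap_cons, List.filterMap_map, h0]
  congr 1
  have h1 : (fun i => (List.drop (a - 1) w)[a * i + 0]?) =
      fun i => w[a * i + (a - 1)]? := by
    funext i
    rw [List.getElem?_drop]
    congr 1
    omega
  rw [h1]
  have hnone : ∀ i, w.length - (a - 1) ≤ i → w[a * i + (a - 1)]? = none := by
    intro i hi
    apply List.getElem?_eq_none
    have : i ≤ a * i := Nat.le_mul_of_pos_left i ha
    omega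
  rw [← filterMap_range_eq_of_none (fun i => w[a * i + (a - 1)]?) (Nat.sub_le _ _) hnone]
  congr 1
  funext i
  show (c :: w)[a * (i + 1) + 0]? = w[a * i + (a - 1)]?
  have heq : a * (i + 1) + 0 = (a * i + (a - 1)) + 1 := by
    have h2 : a * (i + 1) = a * i + a := by ring
    omega
  rw [heq, List.getElem?_cons_succ]

variable {σ : Type}

/-- Runs of a DFA with "gap" relation `A` between consecutive letters and
terminal relation `T`. -/
def chainR (M : DFA α σ) (A T : σ → σ → Prop) : σ → List α → σ → Prop
  | p, [], t => T p t
  | p, c :: x, t => ∃ q, A p q ∧ chainR M A T (M.step q c) x t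

/-- The language determined by the finite data `(A, T, I, e)`. -/
def langOf (M : DFA α σ) (A T : σ → σ → Prop) (I : Set σ) (e : Prop) : Language α :=
  {x | match x with
    | [] => e
    | c :: rest => ∃ q ∈ I, ∃ t ∈ M.accept, chainR M A T (M.step q c) rest t}

/-- gap relation for step `a` -/
def Arel (M : DFA α σ) (a : ℕ) (p q : σ) : Prop :=
  ∃ u : List α, u.length = a - 1 ∧ M.evalFrom p u = q

/-- tail relation for step `a` -/
def Trel (M : DFA α σ) (a : ℕ) (p t : σ) : Prop :=
  ∃ u : List α, u.length < a ∧ M.evalFrom p u = t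

lemma fwd (M : DFA α σ) {a : ℕ} (ha : 1 ≤ a) :
    ∀ n (w : List α) (s : σ), w.length ≤ n → w ≠ [] →
    ∃ c rest, filt a 0 w = c :: rest ∧
      chainR M (Arel M a) (Trel M a) (M.step s c) rest (M.evalFrom s w) := by
  intro n
  induction n with
  | zero =>
    intro w s h hne
    cases w with
    | nil => exact absurd rfl hne
    | cons c w' => simp at h
  | succ n ih =>
    intro w s h hne
    obtain ⟨c, w', rfl⟩ := List.exists_cons_of_ne_nil hne
    refine ⟨c, filt a 0 (w'.drop (a - 1)), filt_cons a ha c w', ?_⟩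
    have hev : M.evalFrom s (c :: w') = M.evalFrom (M.step s c) w' := rfl
    by_cases hd : w'.drop (a - 1) = []
    · rw [hd, filt_nil]
      show Trel M a (M.step s c) (M.evalFrom s (c :: w'))
      exact ⟨w', by have := List.drop_eq_nil_iff.1 hd; omega, hev.symm⟩
    · have hlen : a - 1 < w'.length := by
        by_contra hc
        exact hd (List.drop_eq_nil_iff.2 (by omega))
      have hlen2 : (w'.drop (a - 1)).length ≤ n := by
        rw [List.length_drop]
        simp only [List.length_cons] at h
        omega
      obtain ⟨c', rest', heq, hch⟩ :=
        ih (w'.drop (a - 1)) (M.evalFrom (M.step s c) (w'.take (a - 1))) hlen2 hd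
      rw [heq]
      refine ⟨M.evalFrom (M.step s c) (w'.take (a - 1)),
        ⟨w'.take (a - 1), by rw [List.length_take]; omega, rfl⟩, ?_⟩
      have : M.evalFrom (M.evalFrom (M.step s c) (w'.take (a - 1))) (w'.drop (a - 1)) =
          M.evalFrom s (c :: w') := by
        rw [hev, ← DFA.evalFrom_of_append, List.take_append_drop]
      rwa [this] at hch

lemma bwd (M : DFA α σ) {a : ℕ} (ha : 1 ≤ a) :
    ∀ (x : List α) (p t : σ), chainR M (Arel M a) (Trel M a) p x t →
    ∃ w : List α, M.evalFrom p w = t ∧ ∀ c : α, filt a 0 (c :: w) = c :: x := by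
  intro x
  induction x with
  | nil =>
    intro p t h
    obtain ⟨u, hu, he⟩ := h
    refine ⟨u, he, fun c => ?_⟩
    rw [filt_cons a ha, List.drop_eq_nil_iff.2 (by omega), filt_nil]
  | cons c' x' ih =>
    intro p t h
    obtain ⟨q, ⟨u, hu, hq⟩, hch⟩ := h
    obtain ⟨w', he', hf'⟩ := ih (M.step q c') t hch
    refine ⟨u ++ c' :: w', ?_, fun c => ?_⟩
    · rw [DFA.evalFrom_of_append, hq]
      exact he'
    · rw [filt_cons a ha]
      have : (u ++ c' :: w').drop (a - 1) = c' :: w' := by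
        rw [← hu, List.drop_left]
      rw [this, hf' c']

lemma filtL_eq (M : DFA α σ) {a : ℕ} (b : ℕ) (ha : 1 ≤ a) :
    filtL a b M.accepts = langOf M (Arel M a) (Trel M a)
      {q | ∃ u : List α, u.length = b ∧ M.eval u = q}
      (∃ w ∈ M.accepts, w.length ≤ b) := by
  ext x
  constructor
  · rintro ⟨w, hw, rfl⟩
    rw [filt_drop a b ha]
    by_cases hd : w.drop b = []
    · rw [hd, filt_nil]
      exact ⟨w, hw, List.drop_eq_nil_iff.1 hd⟩
    · obtain ⟨c, rest, heq, hch⟩ :=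
        fwd M ha (w.drop b).length (w.drop b) (M.eval (w.take b)) le_rfl hd
      rw [heq]
      refine ⟨M.eval (w.take b), ⟨w.take b, ?_, rfl⟩, M.eval w, ?_, ?_⟩
      · rw [List.length_take]
        have : b < w.length := by
          by_contra hc
          exact hd (List.drop_eq_nil_iff.2 (by omega))
        omega
      · exact (DFA.mem_accepts M).1 hw
      · have : M.evalFrom (M.eval (w.take b)) (w.drop b) = M.eval w := by
          show M.evalFrom (M.evalFrom M.start (w.take b)) (w.drop b) = _
          rw [← DFA.evalFrom_of_append, List.take_append_drop]
          rfl
        rwa [this] at hch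
  · intro hx
    match x with
    | [] =>
      obtain ⟨w, hw, hlen⟩ := hx
      exact ⟨w, hw, by rw [filt_drop a b ha, List.drop_eq_nil_iff.2 hlen, filt_nil]⟩
    | c :: rest =>
      obtain ⟨q, ⟨u, hu, hq⟩, t, ht, hch⟩ := hx
      obtain ⟨w', he', hf'⟩ := bwd M ha rest (M.step q c) t hch
      refine ⟨u ++ c :: w', ?_, ?_⟩
      · apply (DFA.mem_accepts M).2
        show M.evalFrom M.start (u ++ c :: w') ∈ M.accept
        rw [DFA.evalFrom_of_append]
        have : M.evalFrom M.start u = q := hq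
        rw [this]
        show M.evalFrom (M.step q c) w' ∈ M.accept
        rw [he']
        exact ht
      · rw [filt_drop a b ha]
        have : (u ++ c :: w').drop b = c :: w' := by
          rw [← hu, List.drop_left]
        rw [this, hf' c]

end Aux

theorem filtL_strong_finite {α : Type*} (L : Language α) (hL : L.IsRegular) :
    {M : Language α | ∃ a b : ℕ, 1 ≤ a ∧ M = filtL a b L}.Finite := by
  obtain ⟨σ, hfin, M, rfl⟩ := hL
  have : Finite σ := Finite.of_fintype σ
  apply Set.Finite.subset (Set.finite_range
    (fun d : (σ → σ → Prop) × (σ → σ → Prop) × Set σ × Prop =>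
      langOf M d.1 d.2.1 d.2.2.1 d.2.2.2))
  rintro N ⟨a, b, ha, rfl⟩
  exact ⟨(Arel M a, Trel M a, {q | ∃ u : List α, u.length = b ∧ M.eval u = q},
    ∃ w ∈ M.accepts, w.length ≤ b), (filtL_eq M b ha).symm⟩
end

section
/- For every regular language L, the set of languages { L_{a,0} : a ≥ 1 } obtained by filtering L by all weak arithmetic progressions is finite. -/
namespace FiltAux

variable {α : Type*}

lemma filt_eq_of_le (a N : ℕ) (ha : 1 ≤ a) (w : List α) (hN : w.length ≤ N) :
    (List.range N).filterMap (fun i => w[a * i]?) = filt a 0 w := by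
  obtain ⟨k, rfl⟩ := Nat.exists_eq_add_of_le hN
  rw [List.range_add, List.filterMap_append]
  have h2 : ((List.range k).map (w.length + ·)).filterMap (fun i => w[a * i]?) = [] := by
    rw [List.filterMap_eq_nil_iff]
    intro i hi
    simp only [List.mem_map, List.mem_range] at hi
    obtain ⟨j, _, rfl⟩ := hi
    have : w.length ≤ a * (w.length + j) := by
      calc w.length ≤ w.length + j := Nat.le_add_right _ _
        _ ≤ a * (w.length + j) := Nat.le_mul_of_pos_left _ ha
    simp [List.getElem?_eq_none this]
  rw [h2, List.append_nil]
  simp [filt]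

lemma filt_nil (a : ℕ) : filt a 0 ([] : List α) = [] := by simp [filt]

lemma filt_cons (a : ℕ) (ha : 1 ≤ a) (c : α) (t : List α) :
    filt a 0 (c :: t) = c :: filt a 0 (t.drop (a - 1)) := by
  obtain ⟨b, rfl⟩ : ∃ b, a = b + 1 := ⟨a - 1, (Nat.succ_pred_eq_of_pos ha).symm⟩
  have h1 : filt (b + 1) 0 (c :: t) =
      (List.range (t.length + 1)).filterMap (fun i => (c :: t)[(b + 1) * i]?) := by
    simp [filt]
  have key : ∀ i : ℕ, (c :: t)[(b + 1) * (i + 1)]? = (t.drop b)[(b + 1) * i]? := by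
    intro i
    rw [List.getElem?_drop]
    have h2 : (b + 1) * (i + 1) = (b + (b + 1) * i) + 1 := by ring
    rw [h2, List.getElem?_cons_succ]
  have h3 : ((fun i => (c :: t)[(b + 1) * i]?) ∘ Nat.succ) =
      fun i => (t.drop b)[(b + 1) * i]? := by
    funext i; exact key i
  rw [h1, List.range_succ_eq_map, List.filterMap_cons, List.filterMap_map, h3]
  have h0 : (c :: t)[(b + 1) * 0]? = some c := by simp
  rw [h0]
  have h4 : (List.range t.length).filterMap (fun i => (t.drop b)[(b + 1) * i]?) =
      filt (b + 1) 0 (t.drop b) := by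
    apply filt_eq_of_le _ _ (Nat.le_add_left 1 b)
    simp only [List.length_drop]; exact Nat.sub_le t.length b
  rw [h4]
  norm_num

lemma filt_eq_nil_iff (a : ℕ) (ha : 1 ≤ a) (w : List α) :
    filt a 0 w = [] ↔ w = [] := by
  cases w with
  | nil => simp [filt_nil]
  | cons c t => simp [filt_cons a ha]

variable {σ : Type*} (M : DFA α σ)

/-- Acceptance from `q` of some word whose filtration is `v`. -/
def P (a : ℕ) (q : σ) (v : List α) : Prop :=
  ∃ w, M.evalFrom q w ∈ M.accept ∧ filt a 0 w = v

/-- Reachability in exactly `a - 1` steps. -/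
def R (a : ℕ) (p p' : σ) : Prop :=
  ∃ u : List α, u.length = a - 1 ∧ M.evalFrom p u = p'

/-- Acceptance within at most `a - 1` steps. -/
def A (a : ℕ) (p : σ) : Prop :=
  ∃ u : List α, u.length ≤ a - 1 ∧ M.evalFrom p u ∈ M.accept

lemma P_nil (a : ℕ) (ha : 1 ≤ a) (q : σ) : P M a q [] ↔ q ∈ M.accept := by
  constructor
  · rintro ⟨w, hw, hf⟩
    rw [filt_eq_nil_iff a ha] at hf
    subst hf
    simpa [DFA.evalFrom] using hw
  · intro h
    exact ⟨[], by simpa [DFA.evalFrom] using h, filt_nil a⟩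

lemma P_cons (a : ℕ) (ha : 1 ≤ a) (q : σ) (c : α) (v : List α) :
    P M a q (c :: v) ↔
      (v = [] ∧ A M a (M.step q c)) ∨
      (∃ p, R M a (M.step q c) p ∧ P M a p v) := by
  constructor
  · rintro ⟨w, hw, hf⟩
    cases w with
    | nil => simp [filt_nil] at hf
    | cons d t =>
      rw [filt_cons a ha, List.cons.injEq] at hf
      obtain ⟨rfl, hf⟩ := hf
      by_cases hlen : t.length ≤ a - 1
      · left
        rw [List.drop_eq_nil_of_le hlen, filt_nil] at hf
        refine ⟨hf.symm, t, hlen, ?_⟩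
        simpa [DFA.evalFrom] using hw
      · right
        push_neg at hlen
        refine ⟨M.evalFrom (M.step q d) (t.take (a - 1)),
          ⟨t.take (a - 1), List.length_take_of_le hlen.le, rfl⟩,
          t.drop (a - 1), ?_, hf⟩
        have hsplit : M.evalFrom q (d :: t) =
            M.evalFrom (M.evalFrom (M.step q d) (t.take (a - 1))) (t.drop (a - 1)) := by
          conv_lhs => rw [show (d :: t) = (d :: t.take (a - 1)) ++ t.drop (a - 1) by
            simp [List.take_append_drop]]
          rw [DFA.evalFrom_of_append]
          simp [DFA.evalFrom]
        rw [← hsplit]; exact hw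
  · rintro (⟨rfl, u, hu, hacc⟩ | ⟨p, ⟨u, hu, rfl⟩, w', hw', hf⟩)
    · refine ⟨c :: u, by simpa [DFA.evalFrom] using hacc, ?_⟩
      rw [filt_cons a ha, List.drop_eq_nil_of_le hu, filt_nil]
    · refine ⟨c :: (u ++ w'), ?_, ?_⟩
      · have : M.evalFrom q (c :: (u ++ w')) =
            M.evalFrom (M.evalFrom (M.step q c) u) w' := by
          simp [DFA.evalFrom, List.foldl_append]
        rw [this]; exact hw'
      · rw [filt_cons a ha, List.drop_left' hu, hf]

lemma P_eq_of_eq (a a' : ℕ) (ha : 1 ≤ a) (ha' : 1 ≤ a')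
    (hR : R M a = R M a') (hA : A M a = A M a') :
    ∀ v (q : σ), P M a q v ↔ P M a' q v := by
  intro v
  induction v with
  | nil => intro q; rw [P_nil M a ha, P_nil M a' ha']
  | cons c v ih =>
    intro q
    rw [P_cons M a ha, P_cons M a' ha', hR, hA]
    constructor
    · rintro (h | ⟨p, hp, hP⟩)
      · exact Or.inl h
      · exact Or.inr ⟨p, hp, (ih p).1 hP⟩
    · rintro (h | ⟨p, hp, hP⟩)
      · exact Or.inl h
      · exact Or.inr ⟨p, hp, (ih p).2 hP⟩

lemma filtL_eq_setOf_P (a : ℕ) (L : Language α) (hM : M.accepts = L) :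
    filtL a 0 L = {v | P M a M.start v} := by
  ext v
  constructor
  · rintro ⟨w, hw, rfl⟩
    rw [← hM] at hw
    exact ⟨w, hw, rfl⟩
  · rintro ⟨w, hw, rfl⟩
    exact ⟨w, hM ▸ hw, rfl⟩

end FiltAux

theorem filtL_weak_finite {α : Type*} (L : Language α) (hL : L.IsRegular) :
    {M : Language α | ∃ a : ℕ, 1 ≤ a ∧ M = filtL a 0 L}.Finite := by
  obtain ⟨σ, _, M, hM⟩ := hL
  rw [Set.finite_coe_iff.symm]
  let key : ℕ → ((σ → σ → Prop) × (σ → Prop)) := fun a => (FiltAux.R M a, FiltAux.A M a)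
  have main : ∀ a a' : ℕ, 1 ≤ a → 1 ≤ a' → key a = key a' →
      filtL a 0 L = filtL a' 0 L := by
    intro a a' ha ha' hk
    have h1 := congrArg Prod.fst hk
    have h2 := congrArg Prod.snd hk
    simp only [key] at h1 h2
    rw [FiltAux.filtL_eq_setOf_P M a L hM, FiltAux.filtL_eq_setOf_P M a' L hM]
    ext v
    exact FiltAux.P_eq_of_eq M a a' ha ha' h1 h2 v M.start
  set S := {N : Language α | ∃ a : ℕ, 1 ≤ a ∧ N = filtL a 0 L} with hS
  let h : S → ((σ → σ → Prop) × (σ → Prop)) := fun N => key N.2.choose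
  have hinj : Function.Injective h := by
    rintro ⟨N₁, hN₁⟩ ⟨N₂, hN₂⟩ heq
    have s1 := hN₁.choose_spec
    have s2 := hN₂.choose_spec
    apply Subtype.ext
    show N₁ = N₂
    rw [s1.2, s2.2]
    exact main _ _ s1.1 s2.1 heq
  exact Finite.of_injective h hinj
end

section
/- Let L = { 1 0ⁿ 2 (0⁺3)ⁿ : n ≥ 1 } over the alphabet {0,1,2,3}. Then the languages L_{a,0} for a ≥ 2 are pairwise distinct; in particular, the family { L_{a,0} : a ≥ 1 } is infinite. -/
/-- The word `1 0ⁿ 2 0^{k₁} 3 ⋯ 0^{kₘ} 3` over the alphabet `{0,1,2,3}`. -/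
def Lword (n : ℕ) (ks : List ℕ) : List (Fin 4) :=
  1 :: (List.replicate n 0 ++ 2 :: (ks.map (fun k => List.replicate k (0 : Fin 4) ++ [3])).flatten)

/-- The language `{ 1 0ⁿ 2 (0⁺3)ⁿ : n ≥ 1 }`. -/
def L : Language (Fin 4) :=
  { w | ∃ n : ℕ, 1 ≤ n ∧ ∃ ks : List ℕ,
      ks.length = n ∧ (∀ k ∈ ks, 1 ≤ k) ∧ w = Lword n ks }

/- helper : pointwise-some filterMap is a map -/
lemma myFilterMap_eq_map {β : Type*} : ∀ (l : List ℕ) (f : ℕ → Option β) (g : ℕ → β),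
    (∀ x ∈ l, f x = some (g x)) → l.filterMap f = l.map g := by
  intro l f g h
  induction l with
  | nil => rfl
  | cons x tl ih =>
      rw [List.map_cons, List.filterMap_cons, h x (by simp)]
      rw [ih (fun y hy => h y (by simp [hy]))]

/- the filtered word as a map over an initial range -/
lemma filt_eq_map {α : Type*} [Inhabited α] (a : ℕ) (w : List α) (N : ℕ)
    (hN : ∀ i, i < N ↔ a * i < w.length) :
    filt a 0 w = (List.range N).map (fun i => w.getD (a * i) default) := by
  have hle : N ≤ w.length := by
    by_contra h
    push_neg at h
    have h1 : a * w.length < w.length := (hN w.length).1 h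
    rcases Nat.eq_zero_or_pos a with h0 | h0
    · subst h0
      exact absurd ((hN N).2 (by simpa using h1)) (lt_irrefl N)
    · have := Nat.le_mul_of_pos_left w.length h0
      omega
  have haN : w.length ≤ a * N := by
    have := (hN N).2
    by_contra h; push_neg at h
    exact absurd (this h) (lt_irrefl N)
  unfold filt
  rw [show w.length = N + (w.length - N) by omega, List.range_add, List.filterMap_append]
  have h1 : (List.range N).filterMap (fun i => w[a * i + 0]?) =
      (List.range N).map (fun i => w.getD (a * i) default) := by
    apply myFilterMap_eq_map
    intro x hx
    rw [List.mem_range] at hx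
    have hlt : a * x < w.length := (hN x).1 hx
    rw [Nat.add_zero, List.getElem?_eq_getElem hlt, List.getD_eq_getElem _ _ hlt]
  have h2 : (List.filterMap (fun i => w[a * i + 0]?)
      (List.map (fun x => N + x) (List.range (w.length - N)))) = [] := by
    rw [List.filterMap_eq_nil_iff]
    intro y hy
    rw [List.mem_map] at hy
    obtain ⟨x, _, rfl⟩ := hy
    apply List.getElem?_eq_none
    have h3 : a * N ≤ a * (N + x) := Nat.mul_le_mul_left a (by omega)
    omega
  rw [h1, h2, List.append_nil]

lemma filt_sublist {α : Type*} (a : ℕ) (ha : 1 ≤ a) (w : List α) : (filt a 0 w).Sublist w := by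
  have key : ∀ (l : List ℕ) (k : ℕ), (∀ j ∈ l, k ≤ j) → l.Pairwise (· < ·) →
      (l.filterMap (fun i => w[i]?)).Sublist (w.drop k) := by
    intro l
    induction l with
    | nil => intro k _ _; simp
    | cons i tl ih =>
        intro k hk hp
        rw [List.pairwise_cons] at hp
        rw [List.filterMap_cons]
        by_cases hi : i < w.length
        · rw [List.getElem?_eq_getElem hi]
          have h1 : (tl.filterMap (fun i => w[i]?)).Sublist (w.drop (i + 1)) :=
            ih (i + 1) (fun j hj => hp.1 j hj) hp.2
          have h2 : (w[i] :: tl.filterMap (fun i => w[i]?)).Sublist (w.drop i) := by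
            rw [List.drop_eq_getElem_cons hi]
            exact h1.cons₂ _
          have h3 : (w.drop i).Sublist (w.drop k) := by
            rw [show i = k + (i - k) by have := hk i (by simp); omega, ← List.drop_drop]
            exact List.drop_sublist _ _
          exact h2.trans h3
        · rw [List.getElem?_eq_none (by omega)]
          exact ih k (fun j hj => hk j (by simp [hj])) hp.2
  have h0 : filt a 0 w = ((List.range w.length).map (fun i => a * i + 0)).filterMap
      (fun i => w[i]?) := by
    rw [List.filterMap_map]; rfl
  rw [h0]
  have := key ((List.range w.length).map (fun i => a * i + 0)) 0 (by simp)
    (((List.pairwise_lt_range).map _ (fun x y hxy => by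
      have := (Nat.mul_lt_mul_left (a := a) (by omega)).2 hxy
      omega)))
  simpa using this

lemma getElem?_flatten_replicate {α : Type*} (B : List α) :
    ∀ (m j : ℕ), j < m * B.length →
    (List.replicate m B).flatten[j]? = B[j % B.length]? := by
  intro m
  induction m with
  | zero => intro j hj; omega
  | succ m ih =>
      intro j hj
      rw [List.replicate_succ, List.flatten_cons]
      by_cases h : j < B.length
      · rw [List.getElem?_append_left h, Nat.mod_eq_of_lt h]
      · push_neg at h
        rw [List.getElem?_append_right h, Nat.mod_eq_sub_mod h]
        apply ih
        have : (m + 1) * B.length = m * B.length + B.length := by ring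
        omega

lemma count_three_Lword (n : ℕ) (ks : List ℕ) : (Lword n ks).count 3 = ks.length := by
  rw [Lword]
  rw [List.count_cons, List.count_append, List.count_cons, List.count_flatten, List.map_map]
  have h1 : (List.replicate n (0 : Fin 4)).count 3 = 0 := by
    rw [List.count_replicate]; simp
  have h2 : (List.map (List.count 3 ∘ fun k => List.replicate k (0 : Fin 4) ++ [3]) ks) =
      List.map (fun _ => 1) ks := by
    apply List.map_congr_left
    intro k _
    simp [List.count_append, List.count_replicate]
  rw [h1, h2]
  simp

lemma two_pos_Lword (n : ℕ) (ks : List ℕ) (j : ℕ)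
    (h : (Lword n ks)[j]? = some 2) : j = n + 1 := by
  rw [Lword] at h
  match j with
  | 0 => simp at h
  | (j' + 1) =>
      rw [List.getElem?_cons_succ] at h
      rcases lt_trichotomy j' n with hj | hj | hj
      · rw [List.getElem?_append_left (by simpa using hj)] at h
        rw [List.getElem?_replicate] at h
        split at h
        · simp at h
        · simp at h
      · omega
      · rw [List.getElem?_append_right (by simpa using hj.le)] at h
        simp only [List.length_replicate] at h
        rw [show j' - n = (j' - n - 1) + 1 by omega, List.getElem?_cons_succ] at h
        have hmem := List.mem_of_getElem? h
        simp only [List.mem_flatten, List.mem_map] at hmem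
        obtain ⟨l, ⟨k, _, rfl⟩, hl⟩ := hmem
        rw [List.mem_append, List.mem_replicate] at hl
        rcases hl with h' | h'
        · exact absurd h'.2 (by decide)
        · simp at h'

lemma mul_lt_iff_lt_ceil (a i Ln : ℕ) (ha : 1 ≤ a) : a * i < Ln ↔ i < (Ln + a - 1) / a := by
  constructor
  · intro h
    rw [Nat.lt_iff_add_one_le, Nat.le_div_iff_mul_le (by omega)]
    have : (i + 1) * a = a * i + a := by ring
    omega
  · intro h
    rw [Nat.lt_iff_add_one_le, Nat.le_div_iff_mul_le (by omega)] at h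
    have : (i + 1) * a = a * i + a := by ring
    omega

lemma bound_of_mem (a t : ℕ) (ha : 2 ≤ a)
    (h : (1 :: 2 :: List.replicate t (3 : Fin 4)) ∈ filtL a 0 L) : t < a := by
  obtain ⟨w, hwL, hf⟩ := h
  obtain ⟨n, hn1, ks, hklen, hkpos, rfl⟩ := hwL
  set N := ((Lword n ks).length + a - 1) / a with hNdef
  have hN : ∀ i, i < N ↔ a * i < (Lword n ks).length :=
    fun i => (mul_lt_iff_lt_ceil a i _ (by omega)).symm
  rw [filt_eq_map a _ N hN] at hf
  have hlen : N = t + 2 := by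
    have := congrArg List.length hf
    simpa using this
  have h1lt : 1 < N := by omega
  have hget := congrArg (fun l => l[1]?) hf
  simp only [List.getElem?_map, List.getElem?_range h1lt, Option.map_some,
    List.getElem?_cons_succ, List.getElem?_cons_zero, mul_one] at hget
  have ha_lt : a < (Lword n ks).length := by
    have := (hN 1).1 h1lt
    simpa using this
  have h2 : (Lword n ks)[a]? = some 2 := by
    rw [List.getElem?_eq_getElem ha_lt, ← List.getD_eq_getElem _ default ha_lt]
    rw [hget]
  have han : a = n + 1 := two_pos_Lword n ks a h2
  have hsub := filt_sublist a (by omega) (Lword n ks)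
  rw [filt_eq_map a _ N hN, hf] at hsub
  have hc := hsub.count_le 3
  rw [count_three_Lword] at hc
  have hcx : ((1 : Fin 4) :: 2 :: List.replicate t 3).count 3 = t := by
    simp [List.count_cons, List.count_replicate]
  omega

lemma mem_filtL (b : ℕ) :
    (1 :: 2 :: List.replicate (b + 1) (3 : Fin 4)) ∈ filtL (b + 2) 0 L := by
  refine ⟨Lword (b + 1) (List.replicate (b + 1) (b + 1)),
    ⟨b + 1, by omega, List.replicate (b + 1) (b + 1), by simp, by simp, rfl⟩, ?_⟩
  have hB : (List.replicate (b + 1) (0 : Fin 4) ++ [3]).length = b + 2 := by simp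
  have hw : Lword (b + 1) (List.replicate (b + 1) (b + 1)) =
      1 :: (List.replicate (b + 1) (0 : Fin 4) ++ 2 ::
        (List.replicate (b + 1) (List.replicate (b + 1) (0 : Fin 4) ++ [3])).flatten) := by
    rw [Lword, List.map_replicate]
  have hflen : (List.replicate (b + 1)
      (List.replicate (b + 1) (0 : Fin 4) ++ [3])).flatten.length = (b + 1) * (b + 2) := by
    rw [List.length_flatten, List.map_replicate, hB, List.sum_replicate, smul_eq_mul]
  have hwlen : (Lword (b + 1) (List.replicate (b + 1) (b + 1))).length
      = (b + 1) * (b + 2) + (b + 3) := by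
    rw [hw]
    simp only [List.length_cons, List.length_append, List.length_replicate, hflen]
    omega
  have hN : ∀ i, i < b + 3 ↔ (b + 2) * i < (Lword (b + 1)
      (List.replicate (b + 1) (b + 1))).length := by
    intro i
    rw [hwlen]
    have e1 : (b + 1) * (b + 2) + (b + 3) = (b + 2) * (b + 2) + 1 := by ring
    constructor
    · intro h
      have h2 : (b + 2) * i ≤ (b + 2) * (b + 2) := Nat.mul_le_mul_left _ (by omega)
      omega
    · intro h
      by_contra hc
      push_neg at hc
      have h2 : (b + 2) * (b + 3) ≤ (b + 2) * i := Nat.mul_le_mul_left _ (by omega)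
      have e2 : (b + 2) * (b + 3) = (b + 2) * (b + 2) + (b + 2) := by ring
      omega
  rw [filt_eq_map (b + 2) _ (b + 3) hN]
  -- compute the three kinds of letters
  have h0 : (Lword (b + 1) (List.replicate (b + 1) (b + 1)))[(0 : ℕ)]? = some 1 := by
    rw [hw]; rfl
  have h1 : (Lword (b + 1) (List.replicate (b + 1) (b + 1)))[(b + 2 : ℕ)]? = some 2 := by
    rw [hw, show b + 2 = (b + 1) + 1 from rfl, List.getElem?_cons_succ,
      List.getElem?_append_right (by simp)]
    simp
  have h3 : ∀ x, x < b + 1 →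
      (Lword (b + 1) (List.replicate (b + 1) (b + 1)))[(b + 2) * (2 + x)]? = some 3 := by
    intro x hx
    rw [hw, show (b + 2) * (2 + x) = (2 * b + 3 + (b + 2) * x) + 1 by ring,
      List.getElem?_cons_succ,
      List.getElem?_append_right (by simp only [List.length_replicate]; omega)]
    simp only [List.length_replicate]
    rw [show 2 * b + 3 + (b + 2) * x - (b + 1) = ((b + 2) * x + b + 1) + 1 by omega,
      List.getElem?_cons_succ]
    have hlt : (b + 2) * x + b + 1 < (b + 1) * ((List.replicate (b + 1) (0 : Fin 4) ++ [3]).length) := by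
      rw [hB]
      have h2 : (b + 2) * x ≤ (b + 2) * b := Nat.mul_le_mul_left _ (by omega)
      have e2 : (b + 1) * (b + 2) = (b + 2) * b + (b + 2) := by ring
      omega
    rw [getElem?_flatten_replicate _ _ _ hlt, hB,
      show (b + 2) * x + b + 1 = (b + 1) + (b + 2) * x by omega,
      Nat.add_mul_mod_self_left, Nat.mod_eq_of_lt (by omega),
      List.getElem?_append_right (by simp)]
    simp
  -- assemble
  have hgetD : ∀ j v, (Lword (b + 1) (List.replicate (b + 1) (b + 1)))[j]? = some v →
      (Lword (b + 1) (List.replicate (b + 1) (b + 1))).getD j default = v := by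
    intro j v hv
    rw [List.getD_eq_getElem?_getD, hv]
    rfl
  rw [show b + 3 = 2 + (b + 1) by omega, List.range_add, List.map_append, List.map_map]
  have hpart1 : (List.range 2).map
      (fun i => (Lword (b + 1) (List.replicate (b + 1) (b + 1))).getD ((b + 2) * i) default)
      = [1, 2] := by
    rw [show List.range 2 = [0, 1] from rfl]
    simp only [List.map_cons, List.map_nil]
    rw [hgetD _ _ (by simpa using h0), hgetD _ _ (by simpa using h1)]
  have hpart2 : (List.range (b + 1)).map
      ((fun i => (Lword (b + 1) (List.replicate (b + 1) (b + 1))).getD ((b + 2) * i) default)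
        ∘ fun x => 2 + x) = List.replicate (b + 1) 3 := by
    rw [List.eq_replicate_iff]
    constructor
    · simp
    · intro v hv
      rw [List.mem_map] at hv
      obtain ⟨x, hx, rfl⟩ := hv
      rw [List.mem_range] at hx
      exact hgetD _ _ (h3 x hx)
  rw [hpart1, hpart2]
  rfl

lemma filtL_inj (a a' : ℕ) (ha : 2 ≤ a) (ha' : 2 ≤ a') (h : filtL a 0 L = filtL a' 0 L) :
    a = a' := by
  obtain ⟨b, rfl⟩ : ∃ b, a = b + 2 := ⟨a - 2, by omega⟩
  obtain ⟨b', rfl⟩ : ∃ b', a' = b' + 2 := ⟨a' - 2, by omega⟩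
  have h1 : b + 1 < b' + 2 := bound_of_mem _ _ (by omega) (h ▸ mem_filtL b)
  have h2 : b' + 1 < b + 2 := bound_of_mem _ _ (by omega) (h.symm ▸ mem_filtL b')
  omega

theorem filtL_weak_distinct :
    (∀ a a' : ℕ, 2 ≤ a → 2 ≤ a' → filtL a 0 L = filtL a' 0 L → a = a') ∧
      {M : Language (Fin 4) | ∃ a : ℕ, 1 ≤ a ∧ M = filtL a 0 L}.Infinite := by
  constructor
  · exact filtL_inj
  · apply Set.infinite_of_injective_forall_mem (f := fun n : ℕ => filtL (n + 2) 0 L)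
    · intro m n hmn
      have := filtL_inj (m + 2) (n + 2) (by omega) (by omega) hmn
      omega
    · intro n
      exact ⟨n + 2, by omega, rfl⟩
end

section
/- There exists a context-free language L such that the family of filtered languages { L_{a,0} : a ≥ 1 } (filtering by all weak arithmetic progressions) is infinite. -/
namespace CFLFiltration

/-! ### Generic lemmas about `filt` -/

lemma filt_nil {α : Type*} (a b : ℕ) : filt a b ([] : List α) = [] := rfl

lemma filterMap_range_eq_filt {α : Type*} {a : ℕ} (ha : 1 ≤ a) (l : List α) {n : ℕ}
    (hn : l.length ≤ n) :
    (List.range n).filterMap (fun i => l[a * i + 0]?) = filt a 0 l := by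
  unfold filt
  obtain ⟨d, rfl⟩ : ∃ d, n = l.length + d := ⟨n - l.length, by omega⟩
  rw [List.range_add, List.filterMap_append, List.filterMap_map]
  have h2 : (List.range d).filterMap ((fun i => l[a * i + 0]?) ∘ (fun x => l.length + x)) = [] := by
    rw [List.filterMap_eq_nil_iff]
    intro i _
    show l[a * (l.length + i) + 0]? = none
    apply List.getElem?_eq_none
    have : l.length + i ≤ a * (l.length + i) := Nat.le_mul_of_pos_left _ ha
    omega
  rw [h2, List.append_nil]

lemma filt_cons {α : Type*} {a : ℕ} (ha : 1 ≤ a) (x : α) (s : List α) :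
    filt a 0 (x :: s) = x :: filt a 0 (s.drop (a - 1)) := by
  conv_lhs => unfold filt
  rw [List.length_cons, List.range_succ_eq_map,
    List.filterMap_cons_some (f := fun i => (x :: s)[a * i + 0]?) (a := 0) (b := x) (by simp),
    List.filterMap_map]
  congr 1
  rw [← filterMap_range_eq_filt ha (s.drop (a - 1)) (n := s.length) (by rw [List.length_drop]; omega)]
  apply List.filterMap_congr
  intro i _
  show (x :: s)[a * (i + 1) + 0]? = (s.drop (a - 1))[a * i + 0]?
  rw [List.getElem?_drop]
  have he : a * (i + 1) + 0 = ((a - 1) + (a * i + 0)) + 1 := by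
    have : a * (i + 1) = a * i + a := by ring
    omega
  rw [he, List.getElem?_cons_succ]

lemma filt_replicate_append {α : Type*} {a : ℕ} (ha : 1 ≤ a) (c : α) (m : ℕ) (t : List α) :
    filt a 0 (List.replicate (m * a) c ++ t) = List.replicate m c ++ filt a 0 t := by
  induction m with
  | zero => simp
  | succ m ih =>
    have hrw : List.replicate ((m + 1) * a) c ++ t
        = c :: (List.replicate (m * a + (a - 1)) c ++ t) := by
      rw [← List.cons_append, ← List.replicate_succ]
      congr 2
      have h3 : (m + 1) * a = m * a + a := by ring
      omega
    rw [hrw, filt_cons ha, List.drop_append, List.drop_replicate]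
    have e1 : m * a + (a - 1) - (a - 1) = m * a := by omega
    have e2 : a - 1 - (List.replicate (m * a + (a - 1)) c).length = 0 := by
      rw [List.length_replicate]; omega
    rw [e1, e2, List.drop_zero, ih, List.replicate_succ, List.cons_append]

lemma filt_marker_blocks {α : Type*} {a : ℕ} (ha : 1 ≤ a) (z x : α) (k : ℕ) :
    ∀ y : α, filt a 0 (y :: (List.replicate k (List.replicate (a - 1) z ++ [x])).flatten)
      = y :: List.replicate k x := by
  induction k with
  | zero =>
    intro y
    rw [filt_cons ha]
    simp [filt_nil]
  | succ k ih =>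
    intro y
    rw [List.replicate_succ, List.flatten_cons, filt_cons ha]
    have hd : List.drop (a - 1)
        ((List.replicate (a - 1) z ++ [x]) ++ (List.replicate k (List.replicate (a - 1) z ++ [x])).flatten)
        = x :: (List.replicate k (List.replicate (a - 1) z ++ [x])).flatten := by
      rw [List.append_assoc, List.drop_append, List.drop_replicate]
      simp
    rw [hd, ih x, List.replicate_succ]

lemma filt_getElem? {α : Type*} {a : ℕ} (ha : 1 ≤ a) :
    ∀ (j : ℕ) (w : List α) (x : α), (filt a 0 w)[j]? = some x → w[a * j]? = some x := by
  intro j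
  induction j with
  | zero =>
    intro w x h
    cases w with
    | nil => simp [filt_nil] at h
    | cons y s =>
      rw [filt_cons ha] at h
      simp only [List.getElem?_cons_zero, Option.some.injEq] at h
      simp [← h]
  | succ j ih =>
    intro w x h
    cases w with
    | nil => simp [filt_nil] at h
    | cons y s =>
      rw [filt_cons ha, List.getElem?_cons_succ] at h
      have h2 := ih _ _ h
      rw [List.getElem?_drop] at h2
      have he : a * (j + 1) = ((a - 1) + a * j) + 1 := by
        have : a * (j + 1) = a * j + a := by ring
        omega
      rw [he, List.getElem?_cons_succ]
      exact h2

lemma filt_sublist {α : Type*} {a : ℕ} (ha : 1 ≤ a) (w : List α) : (filt a 0 w).Sublist w := by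
  have key : ∀ (n : ℕ) (w : List α), w.length ≤ n → (filt a 0 w).Sublist w := by
    intro n
    induction n with
    | zero =>
      intro w hw
      have : w = [] := List.eq_nil_of_length_eq_zero (by omega)
      simp [this, filt_nil]
    | succ n ih =>
      intro w hw
      cases w with
      | nil => simp [filt_nil]
      | cons y s =>
        rw [filt_cons ha]
        apply List.Sublist.cons₂
        refine (ih _ ?_).trans (List.drop_sublist _ _)
        rw [List.length_drop]
        simp at hw
        omega
  exact key w.length w le_rfl


/-! ### The grammar -/

open ContextFreeGrammar

abbrev Sym : Type := Symbol (Fin 4) (Fin 3)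

def r1 : ContextFreeRule (Fin 4) (Fin 3) := ⟨0, [.terminal 1, .nonterminal 1]⟩
def r2 : ContextFreeRule (Fin 4) (Fin 3) := ⟨1, [.terminal 0, .nonterminal 1, .nonterminal 2]⟩
def r3 : ContextFreeRule (Fin 4) (Fin 3) := ⟨1, [.terminal 0, .terminal 2, .nonterminal 2]⟩
def r4 : ContextFreeRule (Fin 4) (Fin 3) := ⟨2, [.terminal 0, .nonterminal 2]⟩
def r5 : ContextFreeRule (Fin 4) (Fin 3) := ⟨2, [.terminal 0, .terminal 3]⟩

instance : DecidableEq (ContextFreeRule (Fin 4) (Fin 3)) := fun x y =>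
  decidable_of_iff (x.input = y.input ∧ x.output = y.output)
    (ContextFreeRule.ext_iff).symm

@[reducible] def G : ContextFreeGrammar (Fin 4) := ⟨Fin 3, 0, {r1, r2, r3, r4, r5}⟩

/-- The invariant satisfied by every sentential form reachable from `1 X`. -/
def Q (s : List Sym) : Prop :=
  ∃ u v : List Sym, ∃ M : Sym,
    s = u ++ M :: v ∧
    (M = .nonterminal 1 ∨ M = .terminal 2) ∧
    Symbol.terminal 2 ∉ u ∧ Symbol.terminal 3 ∉ u ∧ (∀ N : Fin 3, Symbol.nonterminal N ∉ u) ∧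
    Symbol.terminal 2 ∉ v ∧ Symbol.nonterminal 0 ∉ v ∧ Symbol.nonterminal 1 ∉ v ∧
    u.length = v.count (Symbol.terminal 3) + v.count (Symbol.nonterminal 2) + 1

lemma surgery {α : Type*} {u v p q : List α} {M N : α}
    (h : u ++ M :: v = p ++ N :: q) (hN : N ∉ u) :
    (M = N ∧ p = u ∧ q = v) ∨ ∃ v1 v2, v = v1 ++ N :: v2 ∧ p = u ++ M :: v1 ∧ q = v2 := by
  induction u generalizing p with
  | nil =>
    cases p with
    | nil =>
      simp only [List.nil_append, List.cons.injEq] at h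
      exact Or.inl ⟨h.1, rfl, h.2.symm⟩
    | cons x p' =>
      simp only [List.nil_append, List.cons_append, List.cons.injEq] at h
      exact Or.inr ⟨p', q, h.2, by simp [h.1], rfl⟩
  | cons a u' ih =>
    simp only [List.mem_cons, not_or] at hN
    cases p with
    | nil =>
      simp only [List.cons_append, List.nil_append, List.cons.injEq] at h
      exact absurd h.1.symm hN.1
    | cons x p' =>
      simp only [List.cons_append, List.cons.injEq] at h
      rcases ih h.2 hN.2 with ⟨h1, h2, h3⟩ | ⟨v1, v2, h1, h2, h3⟩
      · exact Or.inl ⟨h1, by rw [h2, h.1], h3⟩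
      · exact Or.inr ⟨v1, v2, h1, by rw [h2, h.1]; simp, h3⟩

lemma Q_step {s s' : List Sym} (h : G.Produces s s')
    (hs : Q s ∨ s = [Symbol.nonterminal 0]) : Q s' := by
  obtain ⟨r, hrmem, hrw⟩ := h
  obtain ⟨p, q, hpq, rfl⟩ := hrw.exists_parts
  have hrcases : r = r1 ∨ r = r2 ∨ r = r3 ∨ r = r4 ∨ r = r5 := by
    simpa [G] using hrmem
  rcases hs with hQ | rfl
  · obtain ⟨u, v, M, rfl, hM, hu2, hu3, huN, hv2, hv0, hv1, hlen⟩ := hQ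
    have hpq' : u ++ M :: v = p ++ Symbol.nonterminal r.input :: q := by
      simpa using hpq
    rcases surgery hpq' (huN r.input) with ⟨hMN, rfl, rfl⟩ | ⟨v1, v2, rfl, rfl, rfl⟩
    · -- the rewritten nonterminal is the marker, so it is `X`
      have hinput : r.input = 1 := by
        rcases hM with h1 | h1 <;> rw [h1] at hMN
        · exact (Symbol.nonterminal.inj hMN).symm
        · exact absurd hMN (by simp)
      rcases hrcases with rfl | rfl | rfl | rfl | rfl
      · exact absurd hinput (by decide)
      · -- X → 0 X B
        refine ⟨p ++ [.terminal 0], .nonterminal 2 :: q, .nonterminal 1, by simp [r2],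
          Or.inl rfl, ?_, ?_, ?_, ?_, ?_, ?_, ?_⟩
        · simp [hu2]
        · simp [hu3]
        · intro N; simp [huN N]
        · simp [hv2]
        · simp [hv0]
        · simp [hv1]
        · simp [List.count_cons]
          omega
      · -- X → 0 2 B
        refine ⟨p ++ [.terminal 0], .nonterminal 2 :: q, .terminal 2, by simp [r3],
          Or.inr rfl, ?_, ?_, ?_, ?_, ?_, ?_, ?_⟩
        · simp [hu2]
        · simp [hu3]
        · intro N; simp [huN N]
        · simp [hv2]
        · simp [hv0]
        · simp [hv1]
        · simp [List.count_cons]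
          omega
      · exact absurd hinput (by decide)
      · exact absurd hinput (by decide)
    · -- the rewritten nonterminal sits inside `v`, so it is `B`
      have hvmem : Symbol.nonterminal r.input ∈ v1 ++ Symbol.nonterminal r.input :: q := by simp
      rcases hrcases with rfl | rfl | rfl | rfl | rfl
      · exact absurd hvmem hv0
      · exact absurd hvmem hv1
      · exact absurd hvmem hv1
      · -- B → 0 B
        simp only [List.mem_append, List.mem_cons, not_or] at hv2 hv0 hv1
        refine ⟨u, v1 ++ [Symbol.terminal 0, Symbol.nonterminal 2] ++ q, M,
          by simp [r4], hM, hu2, hu3, huN, ?_, ?_, ?_, ?_⟩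
        · simp [hv2.1, hv2.2.2]
        · simp [hv0.1, hv0.2.2]
        · simp [hv1.1, hv1.2.2]
        · simp only [show r4.input = (2 : Fin 3) from rfl] at hlen
          simp [List.count_cons, List.count_append] at hlen ⊢
          omega
      · -- B → 0 3
        simp only [List.mem_append, List.mem_cons, not_or] at hv2 hv0 hv1
        refine ⟨u, v1 ++ [Symbol.terminal 0, Symbol.terminal 3] ++ q, M,
          by simp [r5], hM, hu2, hu3, huN, ?_, ?_, ?_, ?_⟩
        · simp [hv2.1, hv2.2.2]
        · simp [hv0.1, hv0.2.2]
        · simp [hv1.1, hv1.2.2]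
        · simp only [show r5.input = (2 : Fin 3) from rfl] at hlen
          simp [List.count_cons, List.count_append] at hlen ⊢
          omega
  · -- starting form `[S]`
    cases p with
    | cons x p' =>
      simp only [List.cons_append, List.cons.injEq] at hpq
      exact absurd hpq.2.symm (by simp)
    | nil =>
      simp only [List.nil_append, List.singleton_append, List.cons.injEq] at hpq
      obtain ⟨h1, h2⟩ := hpq
      have hq : q = [] := h2.symm
      subst hq
      have hinput : r.input = 0 := (Symbol.nonterminal.inj h1).symm
      rcases hrcases with rfl | rfl | rfl | rfl | rfl
      · exact ⟨[.terminal 1], [], .nonterminal 1, by simp [r1], Or.inl rfl,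
          by simp, by simp, by simp, by simp, by simp, by simp, by simp⟩
      · exact absurd hinput (by decide)
      · exact absurd hinput (by decide)
      · exact absurd hinput (by decide)
      · exact absurd hinput (by decide)

lemma Q_derives {s : List Sym} (h : G.Derives [Symbol.nonterminal 0] s) :
    Q s ∨ s = [Symbol.nonterminal 0] := by
  induction h with
  | refl => exact Or.inr rfl
  | tail _ hstep ih => exact Or.inl (Q_step hstep ih)

lemma key_invariant {w : List (Fin 4)} (hw : w ∈ G.language) {i : ℕ}
    (hi : w[i]? = some 2) : i = w.count 3 + 1 := by
  rw [ContextFreeGrammar.mem_language_iff] at hw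
  have hQ : Q (w.map Symbol.terminal) := by
    rcases Q_derives hw with h | h
    · exact h
    · exfalso
      have : (Symbol.nonterminal (0 : Fin 3) : Sym) ∈ w.map Symbol.terminal := by
        rw [h]; simp
      simp at this
  obtain ⟨u, v, M, heq, hM, hu2, hu3, huN, hv2, hv0, hv1, hlen⟩ := hQ
  have hM2 : M = Symbol.terminal 2 := by
    rcases hM with rfl | rfl
    · exfalso
      have : (Symbol.nonterminal (1 : Fin 3) : Sym) ∈ w.map Symbol.terminal := by
        rw [heq]; simp
      simp at this
    · rfl
  subst hM2
  have hvB : Symbol.nonterminal 2 ∉ v := by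
    intro hmem
    have : (Symbol.nonterminal (2 : Fin 3) : Sym) ∈ w.map Symbol.terminal := by
      rw [heq]; simp [hmem]
    simp at this
  have hcntB : v.count (Symbol.nonterminal 2) = 0 := List.count_eq_zero.mpr hvB
  have hs : (w.map Symbol.terminal)[i]? = some ((Symbol.terminal 2 : Sym)) := by
    rw [List.getElem?_map, hi]
    rfl
  rw [heq] at hs
  have hiu : i = u.length := by
    rcases Nat.lt_trichotomy i u.length with hlt | heq' | hgt
    · exfalso
      rw [List.getElem?_append, if_pos hlt] at hs
      exact hu2 (List.mem_iff_getElem?.mpr ⟨i, hs⟩)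
    · exact heq'
    · exfalso
      rw [List.getElem?_append_right (by omega)] at hs
      have hd : i - u.length = (i - u.length - 1) + 1 := by omega
      rw [hd, List.getElem?_cons_succ] at hs
      exact hv2 (List.mem_iff_getElem?.mpr ⟨_, hs⟩)
  have hcnt : w.count 3 = v.count (Symbol.terminal 3) := by
    have hcm : (w.map Symbol.terminal).count ((Symbol.terminal 3 : Sym)) = w.count 3 :=
      List.count_map_of_injective (β := Sym) w Symbol.terminal
        (fun x y hxy => by simpa using hxy) 3
    rw [heq] at hcm
    have hu : u.count (Symbol.terminal 3) = 0 := List.count_eq_zero.mpr hu3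
    simp only [List.count_append, List.count_cons, hu] at hcm
    simp only [beq_iff_eq, show ((Symbol.terminal 2 : Sym) = Symbol.terminal 3) = False by simp,
      if_false] at hcm
    omega
  omega

/-! ### Explicit derivations -/

lemma dB : ∀ k : ℕ, 1 ≤ k →
    G.Derives [Symbol.nonterminal 2]
      ((List.replicate k (0 : Fin 4) ++ [3]).map Symbol.terminal) := by
  intro k
  induction k with
  | zero => omega
  | succ k ih =>
    intro _
    by_cases hk0 : k = 0
    · subst hk0
      refine Relation.ReflTransGen.single ⟨r5, by simp [G], ?_⟩
      simpa [r5] using ContextFreeRule.Rewrites.input_output (r := r5)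
    · have h1 : G.Produces [Symbol.nonterminal 2]
          ([Symbol.terminal 0] ++ [Symbol.nonterminal 2]) := by
        refine ⟨r4, by simp [G], ?_⟩
        simpa [r4] using ContextFreeRule.Rewrites.input_output (r := r4)
      refine h1.trans_derives ?_
      have h2 := (ih (by omega)).append_left [Symbol.terminal 0]
      simpa [List.replicate_succ] using h2

lemma dX (c : ℕ) (hc : 1 ≤ c) : ∀ n : ℕ, 1 ≤ n →
    G.Derives [Symbol.nonterminal 1]
      ((List.replicate n (0 : Fin 4) ++ 2 ::
        (List.replicate n (List.replicate c (0 : Fin 4) ++ [3])).flatten).map Symbol.terminal) := by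
  intro n
  induction n with
  | zero => omega
  | succ n ih =>
    intro _
    by_cases hn : n = 0
    · subst hn
      have h1 : G.Produces [Symbol.nonterminal 1]
          ([Symbol.terminal 0, Symbol.terminal 2] ++ [Symbol.nonterminal 2]) := by
        refine ⟨r3, by simp [G], ?_⟩
        simpa [r3] using ContextFreeRule.Rewrites.input_output (r := r3)
      refine h1.trans_derives ?_
      have h2 := (dB c hc).append_left [Symbol.terminal 0, Symbol.terminal 2]
      simpa using h2
    · have h1 : G.Produces [Symbol.nonterminal 1]
          ([Symbol.terminal 0] ++ [Symbol.nonterminal 1] ++ [Symbol.nonterminal 2]) := by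
        refine ⟨r2, by simp [G], ?_⟩
        simpa [r2] using ContextFreeRule.Rewrites.input_output (r := r2)
      refine h1.trans_derives ?_
      have h2 := ((ih (by omega)).append_left [Symbol.terminal 0]).append_right
        [Symbol.nonterminal 2]
      refine h2.trans ?_
      have h3 := (dB c hc).append_left ([Symbol.terminal 0] ++
        (List.replicate n (0 : Fin 4) ++ 2 ::
          (List.replicate n (List.replicate c (0 : Fin 4) ++ [3])).flatten).map Symbol.terminal)
      have E : [(Symbol.terminal (0 : Fin 4) : Sym)] ++
          List.map (Symbol.terminal : Fin 4 → Sym) (List.replicate n (0 : Fin 4) ++ 2 ::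
            (List.replicate n (List.replicate c (0 : Fin 4) ++ [3])).flatten) ++
          List.map (Symbol.terminal : Fin 4 → Sym) (List.replicate c (0 : Fin 4) ++ [3])
          = List.map (Symbol.terminal : Fin 4 → Sym) (List.replicate (n + 1) (0 : Fin 4) ++ 2 ::
            (List.replicate (n + 1) (List.replicate c (0 : Fin 4) ++ [3])).flatten) := by
        rw [show List.replicate (n + 1) (0 : Fin 4) = 0 :: List.replicate n 0 from rfl,
          List.replicate_succ' (n := n) (a := List.replicate c (0 : Fin 4) ++ [3]), List.flatten_append]
        simp [List.append_assoc]
      rw [← E]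
      exact h3

/-- The witness word `1 0^{2b-1} 2 (0^{b-1} 3)^{2b-1}`. -/
def wb (b : ℕ) : List (Fin 4) :=
  1 :: (List.replicate (2 * b - 1) 0 ++ 2 ::
    (List.replicate (2 * b - 1) (List.replicate (b - 1) (0 : Fin 4) ++ [3])).flatten)

/-- The distinguishing word `1 0 2 3^{2b-1}`. -/
def vb (b : ℕ) : List (Fin 4) := 1 :: 0 :: 2 :: List.replicate (2 * b - 1) 3

lemma wb_mem (b : ℕ) (hb : 2 ≤ b) : wb b ∈ G.language := by
  rw [ContextFreeGrammar.mem_language_iff]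
  have h1 : G.Produces [Symbol.nonterminal G.initial]
      ([Symbol.terminal 1] ++ [Symbol.nonterminal 1]) := by
    refine ⟨r1, by simp [G], ?_⟩
    simpa [r1] using ContextFreeRule.Rewrites.input_output (r := r1)
  refine h1.trans_derives ?_
  have h2 := (dX (b - 1) (by omega) (2 * b - 1) (by omega)).append_left [Symbol.terminal 1]
  simpa [wb] using h2

lemma filt_wb (b : ℕ) (hb : 2 ≤ b) : filt b 0 (wb b) = vb b := by
  have hb1 : 1 ≤ b := by omega
  unfold wb
  rw [filt_cons hb1, List.drop_append, List.drop_replicate]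
  have e1 : 2 * b - 1 - (b - 1) = b := by omega
  have e2 : b - 1 - (List.replicate (2 * b - 1) (0 : Fin 4)).length = 0 := by
    rw [List.length_replicate]; omega
  rw [e1, e2, List.drop_zero]
  rw [show (List.replicate b (0 : Fin 4)) = List.replicate (1 * b) 0 by rw [one_mul]]
  rw [filt_replicate_append hb1]
  rw [filt_marker_blocks hb1 (0 : Fin 4) (3 : Fin 4) (2 * b - 1) 2]
  simp [vb]

lemma count3_le {a : ℕ} (ha : 1 ≤ a) {w v : List (Fin 4)} (h : filt a 0 w = v) :
    v.count 3 ≤ w.count 3 := by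
  rw [← h]
  exact (filt_sublist ha w).count_le 3

lemma distinct_filt {a b : ℕ} (ha : 2 ≤ a) (hab : a < b) :
    filtL a 0 G.language ≠ filtL b 0 G.language := by
  intro heq
  have hvb : vb b ∈ filtL b 0 G.language :=
    ⟨wb b, wb_mem b (by omega), filt_wb b (by omega)⟩
  rw [← heq] at hvb
  obtain ⟨w, hwL, hfw⟩ := hvb
  have hidx : w[a * 2]? = some 2 := by
    apply filt_getElem? (by omega : (1:ℕ) ≤ a) 2 w 2
    rw [hfw]
    simp [vb]
  have h2 := key_invariant hwL hidx
  have hc : (vb b).count 3 ≤ w.count 3 := count3_le (by omega) hfw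
  have hcv : (vb b).count 3 = 2 * b - 1 := by
    simp [vb, List.count_cons, List.count_replicate]
  omega

end CFLFiltration

theorem exists_cfl_weak_filtration_infinite :
    ∃ (L : Language (Fin 4)), L.IsContextFree ∧
      {M : Language (Fin 4) | ∃ a : ℕ, 1 ≤ a ∧ M = filtL a 0 L}.Infinite := by
  refine ⟨CFLFiltration.G.language, ⟨CFLFiltration.G, rfl⟩, ?_⟩
  apply Set.infinite_of_injective_forall_mem
    (f := fun i : ℕ => filtL (i + 2) 0 CFLFiltration.G.language)
  · intro i j hij
    by_contra hne
    rcases Nat.lt_or_ge i j with h | h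
    · exact CFLFiltration.distinct_filt (by omega) (by omega) hij
    · exact CFLFiltration.distinct_filt (a := j + 2) (by omega) (by omega) hij.symm
  · intro i
    exact ⟨i + 2, by omega, rfl⟩
end

section
/- Let L = { a 0^{3m+1} b (0⁺c)^{m-2} 0⁺ d 0^{3n+1} e (0⁺f)^{n-2} 0⁺ g 0^{3p+1} h (0⁺i)^{p-2} 0⁺ j : m,n,p ≥ 3 } over the alphabet {a,b,c,d,e,f,g,h,i,j,0}. Then diag(L) ∩ a b c⁺ d e f⁺ g h i⁺ j = { a b c^t d e f^t g h i^t j : t ≥ 1 }. -/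
/-- `diag n w` is the diagonal of `w` arranged as an `n × n` array in row-major
order: the letters of `w` at positions `(n+1)·i` for `0 ≤ i ≤ n-1`. -/
def diag {α : Type*} (n : ℕ) (w : List α) : List α :=
  (List.range n).filterMap (fun i => w[(n + 1) * i]?)

/-- `diagL L = { diag(w) : w ∈ L, |w| = n² for some n ≥ 1 }`. -/
def diagL {α : Type*} (L : Language α) : Language α :=
  { x | ∃ w ∈ L, ∃ n : ℕ, 1 ≤ n ∧ w.length = n ^ 2 ∧ x = diag n w }

/-- The alphabet `{a,b,c,d,e,f,g,h,i,j,0}` encoded as `Fin 11`,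
with `0 := 0`, `a := 1`, `b := 2`, …, `j := 10`. -/
abbrev A11 := Fin 11

/-- `seg x y z m ks kf` is the word `x 0^{3m+1} y 0^{k₁} z ⋯ 0^{k_{m-2}} z 0^{kf}`. -/
def seg (x y z : A11) (m : ℕ) (ks : List ℕ) (kf : ℕ) : List A11 :=
  x :: List.replicate (3 * m + 1) 0 ++ y ::
    ((ks.map (fun k => List.replicate k (0 : A11) ++ [z])).flatten ++ List.replicate kf 0)

/-- The language
`{ a 0^{3m+1} b (0⁺c)^{m-2} 0⁺ d 0^{3n+1} e (0⁺f)^{n-2} 0⁺ g 0^{3p+1} h (0⁺i)^{p-2} 0⁺ j : m,n,p ≥ 3 }`. -/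
def Lbig : Language A11 :=
  { w | ∃ m n p : ℕ, 3 ≤ m ∧ 3 ≤ n ∧ 3 ≤ p ∧
      ∃ ks₁ ks₂ ks₃ : List ℕ, ∃ kf₁ kf₂ kf₃ : ℕ,
        ks₁.length = m - 2 ∧ ks₂.length = n - 2 ∧ ks₃.length = p - 2 ∧
        (∀ k ∈ ks₁, 1 ≤ k) ∧ (∀ k ∈ ks₂, 1 ≤ k) ∧ (∀ k ∈ ks₃, 1 ≤ k) ∧
        1 ≤ kf₁ ∧ 1 ≤ kf₂ ∧ 1 ≤ kf₃ ∧
        w = seg 1 2 3 m ks₁ kf₁ ++ seg 4 5 6 n ks₂ kf₂ ++ seg 7 8 9 p ks₃ kf₃ ++ [10] }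

/-- The word `a b c^t d e f^s g h i^u j`. -/
def pat (t s u : ℕ) : List A11 :=
  1 :: 2 :: (List.replicate t 3 ++ 4 :: 5 :: (List.replicate s 6 ++
    7 :: 8 :: (List.replicate u 9 ++ [10])))

namespace DiagAux

open List

/-! ### generic list lemmas -/

lemma filterMap_eq_map_of {α β : Type*} (l : List α) (f : α → Option β) (g : α → β)
    (h : ∀ a ∈ l, f a = some (g a)) : l.filterMap f = l.map g := by
  induction l with
  | nil => simp
  | cons a l ih =>
    rw [filterMap_cons, h a mem_cons_self, map_cons,
      ih (fun a ha => h a (mem_cons_of_mem _ ha))]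

lemma filterMap_getElem?_range {α : Type*} (l : List α) :
    (List.range l.length).filterMap (fun i => l[i]?) = l := by
  induction l with
  | nil => simp
  | cons a l ih =>
    rw [length_cons, List.range_succ_eq_map, filterMap_cons]
    simp only [getElem?_cons_zero, List.filterMap_map]
    congr 1

lemma getElem?_inj_of_count {α : Type*} [DecidableEq α] {l : List α} {a : α}
    (hc : l.count a ≤ 1) {i j : ℕ} (hi : l[i]? = some a) (hj : l[j]? = some a) : i = j := by
  have key : ∀ i j : ℕ, i < j → l[i]? = some a → l[j]? = some a → False := by
    intro i j hij hi hj
    have h1 : a ∈ l.take (i + 1) := by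
      apply List.mem_of_getElem? (i := i)
      rw [List.getElem?_take, if_pos (Nat.lt_succ_self i)]
      exact hi
    have h2 : a ∈ l.drop (i + 1) := by
      apply List.mem_of_getElem? (i := j - (i + 1))
      rw [List.getElem?_drop, show i + 1 + (j - (i + 1)) = j by omega]
      exact hj
    have e1 : 1 ≤ (l.take (i + 1)).count a := List.one_le_count_iff.2 h1
    have e2 : 1 ≤ (l.drop (i + 1)).count a := List.one_le_count_iff.2 h2
    have := List.take_append_drop (i + 1) l
    have : l.count a = (l.take (i + 1)).count a + (l.drop (i + 1)).count a := by
      conv_lhs => rw [← this]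
      rw [List.count_append]
    omega
  rcases Nat.lt_trichotomy i j with h | h | h
  · exact absurd (key i j h hi hj) (by simp)
  · exact h
  · exact absurd (key j i h hj hi) (by simp)

lemma diag_sublist_aux {α : Type*} (c : ℕ) :
    ∀ (k a : ℕ) (w : List α),
      ((List.range k).filterMap (fun i => w[a + (c + 1) * i]?)).Sublist (w.drop a) := by
  intro k
  induction k with
  | zero => intro a w; simp
  | succ k ih =>
    intro a w
    rw [List.range_succ_eq_map, filterMap_cons]
    by_cases ha : a < w.length
    · have h0 : w[a + (c + 1) * 0]? = some w[a] := by
        simpa using List.getElem?_eq_getElem ha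
      rw [h0]
      rw [List.drop_eq_getElem_cons ha]
      refine List.Sublist.cons₂ _ ?_
      have heq : (List.filterMap (fun i => w[a + (c + 1) * i]?) (List.map Nat.succ (List.range k)))
          = (List.range k).filterMap (fun i => w[(a + c + 1) + (c + 1) * i]?) := by
        rw [List.filterMap_map]
        apply List.filterMap_congr
        intro x _
        simp only [Function.comp]
        congr 1
        have : a + (c + 1) * (x + 1) = a + c + 1 + (c + 1) * x := by ring
        rw [Nat.succ_eq_add_one, this]
      rw [heq]
      refine (ih (a + c + 1) w).trans ?_
      have : w.drop (a + c + 1) = (w.drop (a + 1)).drop c := by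
        rw [List.drop_drop]; congr 1; omega
      rw [this]
      exact List.drop_sublist _ _
    · have hall : ∀ i : ℕ, w[a + (c + 1) * i]? = none := by
        intro i
        exact List.getElem?_eq_none (by omega)
      rw [hall 0]
      have : (List.filterMap (fun i => w[a + (c + 1) * i]?) (List.map Nat.succ (List.range k)))
          = [] := by
        rw [List.filterMap_eq_nil_iff]
        intro x _
        exact hall _
      rw [this]
      exact List.nil_sublist _

lemma diag_sublist {α : Type*} (n : ℕ) (w : List α) : (diag n w).Sublist w := by
  have := diag_sublist_aux n n 0 w
  simpa [diag] using this

/-! ### construction lemmas -/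

lemma flatMap_get (n : ℕ) :
    ∀ (L : List A11) (x : A11) (i : ℕ), i ≤ L.length →
      ((L.flatMap (fun ℓ => ℓ :: List.replicate n (0 : A11))) ++ [x])[(n + 1) * i]?
        = (L ++ [x])[i]? := by
  intro L
  induction L with
  | nil =>
    intro x i hi
    have : i = 0 := by simpa using hi
    subst this
    simp
  | cons a L ih =>
    intro x i hi
    match i with
    | 0 => simp
    | (i + 1) =>
      rw [List.flatMap_cons]
      have hassoc : ((a :: List.replicate n (0 : A11)) ++ L.flatMap (fun ℓ => ℓ :: List.replicate n (0:A11))) ++ [x]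
          = (a :: List.replicate n (0 : A11)) ++ (L.flatMap (fun ℓ => ℓ :: List.replicate n (0:A11)) ++ [x]) := by
        rw [List.append_assoc]
      rw [hassoc]
      rw [List.getElem?_append_right (by simp)]
      have hidx : (n + 1) * (i + 1) - (a :: List.replicate n (0:A11)).length = (n + 1) * i := by
        simp; ring_nf; omega
      rw [hidx, ih x i (by simpa using hi)]
      simp

lemma diag_flatMap (n : ℕ) (L : List A11) (x : A11) (h : L.length + 1 = n) :
    diag n ((L.flatMap fun ℓ => ℓ :: List.replicate n 0) ++ [x]) = L ++ [x] := by
  rw [diag]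
  rw [List.filterMap_congr (g := fun i => (L ++ [x])[i]?)
    (fun i hi => flatMap_get n L x i (by rw [List.mem_range] at hi; omega))]
  have h2 : n = (L ++ [x]).length := by simp; omega
  rw [h2, filterMap_getElem?_range]

lemma blocks_shift (z : A11) (c : ℕ) (t : ℕ) :
    ((List.replicate t c).map (fun k => List.replicate k (0 : A11) ++ [z])).flatten
        ++ List.replicate c (0 : A11)
      = List.replicate c (0 : A11)
        ++ (List.replicate t z).flatMap (fun ℓ => ℓ :: List.replicate c 0) := by
  induction t with
  | zero => simp
  | succ t ih =>
    rw [List.replicate_succ, List.map_cons, List.flatten_cons, List.replicate_succ,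
      List.flatMap_cons]
    rw [List.append_assoc, ih]
    simp

lemma seg_uniform (x y z : A11) (m t : ℕ) :
    seg x y z m (List.replicate t (3 * m + 1)) (3 * m + 1)
      = ([x, y] ++ List.replicate t z).flatMap (fun ℓ => ℓ :: List.replicate (3 * m + 1) (0 : A11)) := by
  rw [seg, blocks_shift]
  simp

lemma length_flatMap_blocks (n : ℕ) (L : List A11) :
    (L.flatMap (fun ℓ => ℓ :: List.replicate n (0 : A11))).length = (n + 1) * L.length := by
  induction L with
  | nil => simp
  | cons a L ih => rw [List.flatMap_cons]; simp [ih]; ring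

/-! ### structure lemmas about `seg` -/

lemma seg_cons (x y z : A11) (m : ℕ) (ks : List ℕ) (kf : ℕ) :
    seg x y z m ks kf = x :: (List.replicate (3 * m + 1) (0 : A11) ++
      (y :: ((ks.map (fun k => List.replicate k (0 : A11) ++ [z])).flatten
        ++ List.replicate kf 0))) := by
  rw [seg, List.cons_append]

lemma sum_map_succ (ks : List ℕ) : (ks.map (fun k => k + 1)).sum = ks.sum + ks.length := by
  induction ks with
  | nil => simp
  | cons k ks ih => simp [ih]; omega

lemma seg_length (x y z : A11) (m : ℕ) (ks : List ℕ) (kf : ℕ) :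
    (seg x y z m ks kf).length = 3 * m + 3 + (ks.sum + ks.length) + kf := by
  rw [seg_cons]
  simp only [List.length_cons, List.length_append, List.length_flatten, List.map_map,
    List.length_replicate]
  rw [show (List.length ∘ fun k : ℕ => List.replicate k (0 : A11) ++ [z])
      = (fun k : ℕ => k + 1) by funext k; simp [Function.comp]]
  rw [sum_map_succ]
  omega

lemma seg_get_x (x y z : A11) (m : ℕ) (ks : List ℕ) (kf : ℕ) (r : List A11) :
    (seg x y z m ks kf ++ r)[0]? = some x := by
  rw [seg_cons]
  simp

lemma seg_get_y (x y z : A11) (m : ℕ) (ks : List ℕ) (kf : ℕ) (r : List A11) :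
    (seg x y z m ks kf ++ r)[3 * m + 2]? = some y := by
  rw [seg_cons, List.cons_append, List.getElem?_cons_succ, List.append_assoc]
  rw [List.getElem?_append_right (by simp)]
  simp

lemma count_blocks (v z : A11) (hv : v ≠ 0) (ks : List ℕ) :
    ((ks.map (fun k => List.replicate k (0 : A11) ++ [z])).flatten).count v
      = if z = v then ks.length else 0 := by
  induction ks with
  | nil => simp
  | cons k ks ih =>
    simp only [List.map_cons, List.flatten_cons, List.count_append, ih,
      List.count_replicate, List.count_cons, List.count_nil, beq_iff_eq, List.length_cons]
    rw [if_neg (fun h => hv h.symm)]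
    by_cases hz : z = v <;> simp [hz] <;> omega

lemma seg_count (v x y z : A11) (hv : v ≠ 0) (m : ℕ) (ks : List ℕ) (kf : ℕ) :
    (seg x y z m ks kf).count v
      = (if x = v then 1 else 0) + (if y = v then 1 else 0)
        + (if z = v then ks.length else 0) := by
  rw [seg_cons]
  simp only [List.count_cons, List.count_append, List.count_replicate,
    count_blocks v z hv ks, beq_iff_eq]
  simp only [if_neg (show ¬((0 : A11) = v) from fun h => hv h.symm)]
  split_ifs <;> omega

end DiagAux

open DiagAux List

theorem diagL_inter :
    { w ∈ diagL Lbig | ∃ t s u : ℕ, 1 ≤ t ∧ 1 ≤ s ∧ 1 ≤ u ∧ w = pat t s u } =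
      { w | ∃ t : ℕ, 1 ≤ t ∧ w = pat t t t } := by
  ext v
  constructor
  · rintro ⟨⟨W, hWL, n, hn1, hWlen, hvdiag⟩, t, s, u, ht, hs, hu, hvpat⟩
    obtain ⟨m, q, p, hm3, hq3, hp3, ks₁, ks₂, ks₃, kf₁, kf₂, kf₃, hl1, hl2, hl3,
      _hk1, _hk2, _hk3, _hf1, _hf2, _hf3, hW⟩ := hWL
    -- bounds on indices
    have hsq : (n + 1) * (n - 1) + 1 = n ^ 2 := by
      obtain ⟨k, rfl⟩ : ∃ k, n = k + 1 := ⟨n - 1, by omega⟩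
      simp [Nat.pow_two]; ring
    have hid : ∀ i, i < n → (n + 1) * i < W.length := by
      intro i hi
      rw [hWlen]
      have := Nat.mul_le_mul_left (n + 1) (show i ≤ n - 1 by omega)
      omega
    -- diag as a map
    have hmap : diag n W = (List.range n).map (fun i => W.getD ((n + 1) * i) 0) := by
      rw [diag]
      apply filterMap_eq_map_of
      intro i hi
      rw [List.mem_range] at hi
      have h := hid i hi
      rw [List.getElem?_eq_getElem h]
      congr 1
      exact (List.getD_eq_getElem _ _ h).symm
    have hpatmap : pat t s u = (List.range n).map (fun i => W.getD ((n + 1) * i) 0) := by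
      rw [← hmap, ← hvdiag, hvpat]
    have hlenpat : (pat t s u).length = n := by rw [hpatmap]; simp
    have hn7 : t + s + u + 7 = n := by
      simp [pat] at hlenpat; omega
    have E : ∀ i, i < n → W[(n + 1) * i]? = (pat t s u)[i]? := by
      intro i hi
      rw [hpatmap, List.getElem?_map, List.getElem?_range hi]
      have h := hid i hi
      rw [List.getElem?_eq_getElem h]
      simp only [Option.map_some]
      congr 1
      exact (List.getD_eq_getElem _ _ h).symm
    -- counts in W
    have c2 : W.count 2 = 1 := by
      rw [hW, List.count_append, List.count_append, List.count_append,
        seg_count 2 1 2 3 (by decide), seg_count 2 4 5 6 (by decide),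
        seg_count 2 7 8 9 (by decide)]
      simp [List.count_cons, List.count_nil]
    have c4 : W.count 4 = 1 := by
      rw [hW, List.count_append, List.count_append, List.count_append,
        seg_count 4 1 2 3 (by decide), seg_count 4 4 5 6 (by decide),
        seg_count 4 7 8 9 (by decide)]
      simp [List.count_cons, List.count_nil]
    have c5 : W.count 5 = 1 := by
      rw [hW, List.count_append, List.count_append, List.count_append,
        seg_count 5 1 2 3 (by decide), seg_count 5 4 5 6 (by decide),
        seg_count 5 7 8 9 (by decide)]
      simp [List.count_cons, List.count_nil]
    have c7 : W.count 7 = 1 := by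
      rw [hW, List.count_append, List.count_append, List.count_append,
        seg_count 7 1 2 3 (by decide), seg_count 7 4 5 6 (by decide),
        seg_count 7 7 8 9 (by decide)]
      simp [List.count_cons, List.count_nil]
    have c8 : W.count 8 = 1 := by
      rw [hW, List.count_append, List.count_append, List.count_append,
        seg_count 8 1 2 3 (by decide), seg_count 8 4 5 6 (by decide),
        seg_count 8 7 8 9 (by decide)]
      simp [List.count_cons, List.count_nil]
    have c3 : W.count 3 = ks₁.length := by
      rw [hW, List.count_append, List.count_append, List.count_append,
        seg_count 3 1 2 3 (by decide), seg_count 3 4 5 6 (by decide),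
        seg_count 3 7 8 9 (by decide)]
      simp [List.count_cons, List.count_nil]
    have c6 : W.count 6 = ks₂.length := by
      rw [hW, List.count_append, List.count_append, List.count_append,
        seg_count 6 1 2 3 (by decide), seg_count 6 4 5 6 (by decide),
        seg_count 6 7 8 9 (by decide)]
      simp [List.count_cons, List.count_nil]
    have c9 : W.count 9 = ks₃.length := by
      rw [hW, List.count_append, List.count_append, List.count_append,
        seg_count 9 1 2 3 (by decide), seg_count 9 4 5 6 (by decide),
        seg_count 9 7 8 9 (by decide)]
      simp [List.count_cons, List.count_nil]
    -- pat getElem? facts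
    have pg1 : (pat t s u)[1]? = some 2 := by simp [pat]
    have pgd : (pat t s u)[t + 2]? = some 4 := by
      rw [pat, List.getElem?_cons_succ, List.getElem?_cons_succ,
        List.getElem?_append_right (by simp)]
      simp
    have pge : (pat t s u)[t + 3]? = some 5 := by
      rw [pat, List.getElem?_cons_succ, List.getElem?_cons_succ,
        List.getElem?_append_right (by simp only [List.length_replicate]; omega)]
      rw [show t + 1 - (List.replicate t (3:A11)).length = 1 by simp only [List.length_replicate]; omega]
      simp
    have pgg : (pat t s u)[t + s + 4]? = some 7 := by
      rw [pat, List.getElem?_cons_succ, List.getElem?_cons_succ,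
        List.getElem?_append_right (by simp only [List.length_replicate]; omega)]
      rw [show t + s + 2 - (List.replicate t (3:A11)).length = s + 2 by simp only [List.length_replicate]; omega]
      rw [List.getElem?_cons_succ, List.getElem?_cons_succ,
        List.getElem?_append_right (by simp)]
      simp
    have pgh : (pat t s u)[t + s + 5]? = some 8 := by
      rw [pat, List.getElem?_cons_succ, List.getElem?_cons_succ,
        List.getElem?_append_right (by simp only [List.length_replicate]; omega)]
      rw [show t + s + 3 - (List.replicate t (3:A11)).length = s + 3 by simp only [List.length_replicate]; omega]
      rw [List.getElem?_cons_succ, List.getElem?_cons_succ,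
        List.getElem?_append_right (by simp only [List.length_replicate]; omega)]
      rw [show s + 1 - (List.replicate s (6:A11)).length = 1 by simp only [List.length_replicate]; omega]
      simp
    -- W getElem? facts
    set S1 := seg 1 2 3 m ks₁ kf₁ with hS1
    set S2 := seg 4 5 6 q ks₂ kf₂ with hS2
    set S3 := seg 7 8 9 p ks₃ kf₃ with hS3
    have hW' : W = S1 ++ (S2 ++ (S3 ++ [10])) := by
      rw [hW, List.append_assoc, List.append_assoc]
    have wb : W[3 * m + 2]? = some 2 := by
      rw [hW']; exact seg_get_y 1 2 3 m ks₁ kf₁ _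
    have wd : W[S1.length]? = some 4 := by
      rw [hW', List.getElem?_append_right (le_refl _), Nat.sub_self]
      exact seg_get_x 4 5 6 q ks₂ kf₂ _
    have we : W[S1.length + (3 * q + 2)]? = some 5 := by
      rw [hW', List.getElem?_append_right (by omega),
        show S1.length + (3 * q + 2) - S1.length = 3 * q + 2 by omega]
      exact seg_get_y 4 5 6 q ks₂ kf₂ _
    have wg : W[S1.length + S2.length]? = some 7 := by
      rw [hW', List.getElem?_append_right (by omega),
        show S1.length + S2.length - S1.length = S2.length by omega,
        List.getElem?_append_right (le_refl _), Nat.sub_self]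
      exact seg_get_x 7 8 9 p ks₃ kf₃ _
    have wh : W[S1.length + S2.length + (3 * p + 2)]? = some 8 := by
      rw [hW', List.getElem?_append_right (by omega),
        show S1.length + S2.length + (3 * p + 2) - S1.length = S2.length + (3 * p + 2) by omega,
        List.getElem?_append_right (by omega),
        show S2.length + (3 * p + 2) - S2.length = 3 * p + 2 by omega]
      exact seg_get_y 7 8 9 p ks₃ kf₃ _
    -- position identities
    have e1 : W[(n + 1) * 1]? = some 2 := by rw [E 1 (by omega)]; exact pg1
    have ed : W[(n + 1) * (t + 2)]? = some 4 := by rw [E _ (by omega)]; exact pgd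
    have ee : W[(n + 1) * (t + 3)]? = some 5 := by rw [E _ (by omega)]; exact pge
    have eg : W[(n + 1) * (t + s + 4)]? = some 7 := by rw [E _ (by omega)]; exact pgg
    have eh : W[(n + 1) * (t + s + 5)]? = some 8 := by rw [E _ (by omega)]; exact pgh
    have hb : (n + 1) * 1 = 3 * m + 2 :=
      getElem?_inj_of_count (le_of_eq c2) e1 wb
    have hd : (n + 1) * (t + 2) = S1.length :=
      getElem?_inj_of_count (le_of_eq c4) ed wd
    have he : (n + 1) * (t + 3) = S1.length + (3 * q + 2) :=
      getElem?_inj_of_count (le_of_eq c5) ee we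
    have hg : (n + 1) * (t + s + 4) = S1.length + S2.length :=
      getElem?_inj_of_count (le_of_eq c7) eg wg
    have hh : (n + 1) * (t + s + 5) = S1.length + S2.length + (3 * p + 2) :=
      getElem?_inj_of_count (le_of_eq c8) eh wh
    have hqm : q = m := by
      have h1 : (n + 1) * (t + 3) = (n + 1) * (t + 2) + (n + 1) := by ring
      omega
    have hpm : p = m := by
      have h1 : (n + 1) * (t + s + 5) = (n + 1) * (t + s + 4) + (n + 1) := by ring
      omega
    -- count bounds via sublist
    have hsub : (pat t s u).Sublist W := by
      rw [hvpat] at hvdiag; rw [hvdiag]; exact diag_sublist n W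
    have pc3 : (pat t s u).count 3 = t := by
      simp [pat, List.count_append, List.count_cons, List.count_replicate]
    have pc6 : (pat t s u).count 6 = s := by
      simp [pat, List.count_append, List.count_cons, List.count_replicate]
    have pc9 : (pat t s u).count 9 = u := by
      simp [pat, List.count_append, List.count_cons, List.count_replicate]
    have bt : t ≤ m - 2 := by
      have := hsub.count_le 3; rw [pc3, c3, hl1] at this; exact this
    have bs : s ≤ m - 2 := by
      have := hsub.count_le 6; rw [pc6, c6, hl2] at this; omega
    have bu : u ≤ m - 2 := by
      have := hsub.count_le 9; rw [pc9, c9, hl3] at this; omega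
    -- conclude t = s = u
    have htsu : t = s ∧ s = u := by omega
    exact ⟨t, ht, by rw [hvpat, htsu.1, htsu.2]⟩
  · rintro ⟨t, ht, rfl⟩
    refine ⟨?_, t, t, t, ht, ht, ht, rfl⟩
    refine ⟨seg 1 2 3 (t + 2) (List.replicate t (3 * (t + 2) + 1)) (3 * (t + 2) + 1) ++
      seg 4 5 6 (t + 2) (List.replicate t (3 * (t + 2) + 1)) (3 * (t + 2) + 1) ++
      seg 7 8 9 (t + 2) (List.replicate t (3 * (t + 2) + 1)) (3 * (t + 2) + 1) ++ [10],
      ?_, 3 * (t + 2) + 1, by omega, ?_, ?_⟩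
    · exact ⟨t + 2, t + 2, t + 2, by omega, by omega, by omega,
        List.replicate t (3 * (t + 2) + 1), List.replicate t (3 * (t + 2) + 1),
        List.replicate t (3 * (t + 2) + 1), 3 * (t + 2) + 1, 3 * (t + 2) + 1, 3 * (t + 2) + 1,
        by rw [List.length_replicate]; omega,
        by rw [List.length_replicate]; omega,
        by rw [List.length_replicate]; omega,
        fun k hk => by rw [List.eq_of_mem_replicate hk]; omega,
        fun k hk => by rw [List.eq_of_mem_replicate hk]; omega,
        fun k hk => by rw [List.eq_of_mem_replicate hk]; omega,
        by omega, by omega, by omega, rfl⟩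
    · have hsum : (List.replicate t (3 * (t + 2) + 1)).sum = t * (3 * (t + 2) + 1) := by
        simp [List.sum_replicate, smul_eq_mul]
      simp only [List.length_append, seg_length, hsum, List.length_replicate,
        List.length_cons, List.length_nil]
      ring
    · rw [seg_uniform 1 2 3 (t + 2) t, seg_uniform 4 5 6 (t + 2) t, seg_uniform 7 8 9 (t + 2) t]
      rw [← List.flatMap_append, ← List.flatMap_append]
      rw [diag_flatMap (3 * (t + 2) + 1) _ 10
        (by simp only [List.length_append, List.length_replicate, List.length_cons,
          List.length_nil]; omega)]
      rw [pat]
      simp [List.append_assoc]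
end

section
/- For every t ≥ 1, the word z = a 0^{3m+1} b (0^{3m+1} c)^{m-2} 0^{3m+1} d 0^{3m+1} e (0^{3m+1} f)^{m-2} 0^{3m+1} g 0^{3m+1} h (0^{3m+1} i)^{m-2} 0^{3m+1} j with m = t+2 has length (3m+1)² and diag(z) = a b c^t d e f^t g h i^t j. -/
def blocks (L : List A11) (n : ℕ) : List A11 :=
  (L.map (fun x => x :: List.replicate n (0 : A11))).flatten

lemma blocks_length (L : List A11) (n : ℕ) :
    (blocks L n).length = L.length * (n + 1) := by
  induction L with
  | nil => simp [blocks]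
  | cons x L ih =>
    simp only [blocks, List.map_cons, List.flatten_cons, List.length_append] at *
    simp [ih]; ring

lemma blocks_append (L₁ L₂ : List A11) (n : ℕ) :
    blocks (L₁ ++ L₂) n = blocks L₁ n ++ blocks L₂ n := by
  simp [blocks]

lemma blocks_get (n : ℕ) (r : List A11) :
    ∀ (L : List A11) (i : ℕ) (h : i < L.length),
      (blocks L n ++ r)[(n + 1) * i]? = some L[i] := by
  intro L
  induction L with
  | nil => intro i h; simp at h
  | cons x L ih =>
    intro i h
    cases i with
    | zero => simp [blocks]
    | succ i =>
      have hlen : (x :: List.replicate n (0 : A11)).length = n + 1 := by simp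
      have hidx : (n + 1) * (i + 1) = (n + 1) + (n + 1) * i := by ring
      rw [blocks, List.map_cons, List.flatten_cons, List.append_assoc, hidx]
      rw [List.getElem?_append_right (by simp)]
      simp only [hlen]
      have : n + 1 + (n + 1) * i - (n + 1) = (n + 1) * i := by omega
      rw [this]
      have := ih i (by simpa using h)
      rw [blocks] at this
      simpa using this

lemma filterMap_getElem (L : List A11) :
    (List.range L.length).filterMap (fun i => L[i]?) = L := by
  induction L with
  | nil => simp
  | cons x L ih =>
    rw [List.length_cons, List.range_succ_eq_map]
    simp only [List.filterMap_cons, List.filterMap_map,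
      List.getElem?_cons_zero]
    have hcomp : List.filterMap ((fun i => (x :: L)[i]?) ∘ Nat.succ) (List.range L.length)
        = List.filterMap (fun i => L[i]?) (List.range L.length) := by
      apply List.filterMap_congr; intro i _; simp
    rw [hcomp, ih]

lemma diag_blocks (L : List A11) (y : A11) (n : ℕ) (h : L.length + 1 = n) :
    diag n (blocks L n ++ [y]) = L ++ [y] := by
  subst h
  rw [diag, List.range_succ, List.filterMap_append]
  congr 1
  · have hcong : ∀ i ∈ List.range L.length,
        (blocks L (L.length + 1) ++ [y])[(L.length + 1 + 1) * i]? = L[i]? := by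
      intro i hi
      rw [List.mem_range] at hi
      rw [blocks_get _ _ _ _ hi, List.getElem?_eq_getElem hi]
    rw [List.filterMap_congr hcong, filterMap_getElem]
  · have hlen : (blocks L (L.length + 1)).length = (L.length + 1 + 1) * L.length := by
      rw [blocks_length]; ring
    simp only [List.filterMap_cons, List.filterMap_nil]
    rw [List.getElem?_append_right (by omega), hlen]
    simp

lemma rep_shift (t n : ℕ) (z : A11) :
    (List.replicate t (List.replicate n (0 : A11) ++ [z])).flatten ++ List.replicate n (0 : A11)
      = List.replicate n (0 : A11) ++ (List.replicate t (z :: List.replicate n (0 : A11))).flatten := by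
  induction t with
  | zero => simp
  | succ t ih =>
    simp only [List.replicate_succ, List.flatten_cons, List.append_assoc]
    rw [ih]
    simp

lemma seg_eq (x y z : A11) (t : ℕ) :
    seg x y z (t + 2) (List.replicate t (3 * (t + 2) + 1)) (3 * (t + 2) + 1)
      = blocks ([x, y] ++ List.replicate t z) (3 * (t + 2) + 1) := by
  simp only [seg, blocks, List.map_replicate, List.map_append, List.map_cons, List.map_nil,
    List.flatten_append, List.flatten_cons, List.flatten_nil]
  rw [rep_shift]
  simp

theorem diag_of_canonical_word (t : ℕ) (ht : 1 ≤ t) :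
    (seg 1 2 3 (t + 2) (List.replicate t (3 * (t + 2) + 1)) (3 * (t + 2) + 1) ++
        seg 4 5 6 (t + 2) (List.replicate t (3 * (t + 2) + 1)) (3 * (t + 2) + 1) ++
        seg 7 8 9 (t + 2) (List.replicate t (3 * (t + 2) + 1)) (3 * (t + 2) + 1) ++
        [10]).length = (3 * (t + 2) + 1) ^ 2 ∧
    diag (3 * (t + 2) + 1)
      (seg 1 2 3 (t + 2) (List.replicate t (3 * (t + 2) + 1)) (3 * (t + 2) + 1) ++
        seg 4 5 6 (t + 2) (List.replicate t (3 * (t + 2) + 1)) (3 * (t + 2) + 1) ++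
        seg 7 8 9 (t + 2) (List.replicate t (3 * (t + 2) + 1)) (3 * (t + 2) + 1) ++
        [10]) = pat t t t := by
  rw [seg_eq, seg_eq, seg_eq, ← blocks_append, ← blocks_append]
  have hlen : (([1, 2] ++ List.replicate t 3 ++ ([4, 5] ++ List.replicate t 6) ++
      ([7, 8] ++ List.replicate t 9)) : List A11).length = 3 * t + 6 := by
    simp; omega
  constructor
  · simp only [List.length_append, List.length_cons, List.length_nil, blocks_length, hlen]
    ring
  · rw [diag_blocks _ _ _ (by rw [hlen]; ring)]
    simp [pat]
end
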